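/- arXiv:1501.01801 — 7 statements merged into one kernel-verified Lean document; each statement's English description precedes it below -/
import Mathlib

section
/- Let n ≥ 1, 0 < s < 1 and 1 ≤ p < ∞ with sp < n. There is a constant C = C(n, s, p) such that for every ε > 0 and all ω, σ ∈ ℝⁿ with |ω| = |σ| = 1 (sup norm), the kernel k(ω, σ) := ∫₀^ε ∫₀^ε δ^{n−1} λ^{n−1} / |δω − λσ|^{n+sp} dδ dλ satisfies k(ω, σ) ≤ C ε^{n−sp} / |ω − σ|^{n+sp−1}. -/
open MeasureTheory Filter Topology ENNReal

noncomputable section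

open Set in
private theorem st7_I1 (c q : ℝ) (hc : 0 < c) (hq : 0 < q) :
    ∫⁻ t in Ioi (0:ℝ), ENNReal.ofReal ((t + c) ^ (-(q+1))) = ENNReal.ofReal (c ^ (-q) / q) := by
  have hemb : MeasurableEmbedding (fun x : ℝ => x + c) := (measurableEmbedding_addRight c)
  have hmp : MeasurePreserving (fun x : ℝ => x + c) volume volume :=
    measurePreserving_add_right volume c
  have hpre : (fun x : ℝ => x + c) ⁻¹' (Ioi c) = Ioi 0 := by
    ext x; simp [lt_add_iff_pos_left]
  have h1 : ∫⁻ t in Ioi (0:ℝ), ENNReal.ofReal ((t + c) ^ (-(q+1)))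
      = ∫⁻ u in Ioi c, ENNReal.ofReal (u ^ (-(q+1))) := by
    rw [← hpre]
    exact hmp.setLIntegral_comp_preimage_emb hemb
      (fun u => ENNReal.ofReal (u ^ (-(q+1)))) (Ioi c)
  rw [h1, ← ofReal_integral_eq_lintegral_ofReal
    (integrableOn_Ioi_rpow_of_lt (by linarith) hc)
    ((ae_restrict_iff' measurableSet_Ioi).2 (Filter.Eventually.of_forall fun x hx =>
      (Real.rpow_pos_of_pos (hc.trans hx) _).le)),
    integral_Ioi_rpow_of_lt (by linarith) hc]
  norm_num

open Set in
private theorem st7_I2 (c q δ ε : ℝ) (hc : 0 < c) (hq : 0 < q) :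
    ∫⁻ lam in Ioo (0:ℝ) ε, ENNReal.ofReal ((|δ - lam| + c) ^ (-(q+1)))
      ≤ 2 * ENNReal.ofReal (c ^ (-q) / q) := by
  set g : ℝ → ENNReal := fun u => ENNReal.ofReal ((|δ - u| + c) ^ (-(q+1))) with hg
  calc ∫⁻ lam in Ioo (0:ℝ) ε, g lam ≤ ∫⁻ lam, g lam := setLIntegral_le_lintegral _ _
    _ = (∫⁻ lam in Iic δ, g lam) + ∫⁻ lam in Ioi δ, g lam := by
        rw [← lintegral_add_compl g measurableSet_Iic, compl_Iic]
    _ ≤ ENNReal.ofReal (c ^ (-q) / q) + ENNReal.ofReal (c ^ (-q) / q) := by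
        gcongr
        · have h0 : ∫⁻ lam in Iic δ, g lam = ∫⁻ lam in Iio δ, g lam := by
            rw [Measure.restrict_congr_set Iio_ae_eq_Iic.symm]
          have hemb : MeasurableEmbedding (fun x : ℝ => δ - x) :=
            (MeasurableEquiv.subLeft δ).measurableEmbedding
          have hmp : MeasurePreserving (fun x : ℝ => δ - x) volume volume :=
            Measure.measurePreserving_sub_left volume δ
          have hpre : (fun x : ℝ => δ - x) ⁻¹' (Iio δ) = Ioi 0 := by
            ext x; simp
          have h1 : ∫⁻ lam in Iio δ, g lam = ∫⁻ x in Ioi (0:ℝ), g (δ - x) := by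
            rw [← hmp.setLIntegral_comp_preimage_emb hemb g (Iio δ), hpre]
          have h2 : ∫⁻ x in Ioi (0:ℝ), g (δ - x)
              = ∫⁻ x in Ioi (0:ℝ), ENNReal.ofReal ((x + c) ^ (-(q+1))) := by
            refine setLIntegral_congr_fun measurableSet_Ioi
              (fun x hx => ?_)
            simp only [hg]
            rw [show δ - (δ - x) = x by ring, abs_of_pos hx]
          rw [h0, h1, h2, st7_I1 c q hc hq]
        · have hemb : MeasurableEmbedding (fun x : ℝ => x + δ) := (measurableEmbedding_addRight δ)
          have hmp : MeasurePreserving (fun x : ℝ => x + δ) volume volume :=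
            measurePreserving_add_right volume δ
          have hpre : (fun x : ℝ => x + δ) ⁻¹' (Ioi δ) = Ioi 0 := by
            ext x; simp [lt_add_iff_pos_left]
          have h1 : ∫⁻ lam in Ioi δ, g lam = ∫⁻ x in Ioi (0:ℝ), g (x + δ) := by
            rw [← hmp.setLIntegral_comp_preimage_emb hemb g (Ioi δ), hpre]
          have h2 : ∫⁻ x in Ioi (0:ℝ), g (x + δ)
              = ∫⁻ x in Ioi (0:ℝ), ENNReal.ofReal ((x + c) ^ (-(q+1))) := by
            refine setLIntegral_congr_fun measurableSet_Ioi
              (fun x hx => ?_)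
            simp only [hg]
            rw [show δ - (x + δ) = -x by ring, abs_neg, abs_of_pos hx]
          rw [h1, h2, st7_I1 c q hc hq]
    _ = 2 * ENNReal.ofReal (c ^ (-q) / q) := by ring

open Set in
private theorem st7_I3 (ε r : ℝ) (hε : 0 < ε) (hr : -1 < r) :
    ∫⁻ δ in Ioo (0:ℝ) ε, ENNReal.ofReal (δ ^ r) ≤ ENNReal.ofReal (ε ^ (r+1) / (r+1)) := by
  have hint : IntegrableOn (fun x : ℝ => x ^ r) (Ioc 0 ε) volume :=
    (intervalIntegrable_iff_integrableOn_Ioc_of_le hε.le).mp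
      (intervalIntegral.intervalIntegrable_rpow' hr)
  calc ∫⁻ δ in Ioo (0:ℝ) ε, ENNReal.ofReal (δ ^ r)
      ≤ ∫⁻ δ in Ioc (0:ℝ) ε, ENNReal.ofReal (δ ^ r) := lintegral_mono_set Ioo_subset_Ioc_self
    _ = ENNReal.ofReal (∫ δ in Ioc (0:ℝ) ε, δ ^ r) := by
        rw [← ofReal_integral_eq_lintegral_ofReal hint
          ((ae_restrict_iff' measurableSet_Ioc).2 (Filter.Eventually.of_forall fun x hx =>
            (Real.rpow_pos_of_pos hx.1 _).le))]
    _ = ENNReal.ofReal (ε ^ (r+1) / (r+1)) := by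
        rw [← intervalIntegral.integral_of_le hε.le, integral_rpow (Or.inl hr)]
        rw [Real.zero_rpow (by linarith : r + 1 ≠ 0)]
        norm_num

private theorem st7_geom {n : ℕ} (ω σ : Fin n → ℝ) (hω : ‖ω‖ = 1) (hσ : ‖σ‖ = 1)
    (δ lam : ℝ) (hδ : 0 ≤ δ) (hl : 0 ≤ lam) :
    |δ - lam| + max δ lam * ‖ω - σ‖ ≤ 3 * ‖δ • ω - lam • σ‖ := by
  set a := ‖δ • ω - lam • σ‖ with ha
  have h1 : |δ - lam| ≤ a := by
    have := abs_norm_sub_norm_le (δ • ω) (lam • σ)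
    rwa [norm_smul, norm_smul, hω, hσ, Real.norm_eq_abs, Real.norm_eq_abs,
      abs_of_nonneg hδ, abs_of_nonneg hl, mul_one, mul_one] at this
  have h2 : δ * ‖ω - σ‖ ≤ 2 * a := by
    have e : δ • ω - δ • σ = (δ • ω - lam • σ) + ((lam - δ) • σ) := by
      rw [sub_smul]; abel
    calc δ * ‖ω - σ‖ = ‖δ • (ω - σ)‖ := by
          rw [norm_smul, Real.norm_eq_abs, abs_of_nonneg hδ]
      _ = ‖δ • ω - δ • σ‖ := by rw [smul_sub]
      _ ≤ a + ‖(lam - δ) • σ‖ := by rw [e]; exact norm_add_le _ _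
      _ = a + |lam - δ| := by rw [norm_smul, hσ, Real.norm_eq_abs, mul_one]
      _ ≤ a + a := by rw [abs_sub_comm]; linarith
      _ = 2 * a := by ring
  have h3 : lam * ‖ω - σ‖ ≤ 2 * a := by
    have e : lam • ω - lam • σ = ((lam - δ) • ω) + (δ • ω - lam • σ) := by
      rw [sub_smul]; abel
    calc lam * ‖ω - σ‖ = ‖lam • (ω - σ)‖ := by
          rw [norm_smul, Real.norm_eq_abs, abs_of_nonneg hl]
      _ = ‖lam • ω - lam • σ‖ := by rw [smul_sub]
      _ ≤ ‖(lam - δ) • ω‖ + a := by rw [e]; exact norm_add_le _ _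
      _ = |lam - δ| + a := by rw [norm_smul, hω, Real.norm_eq_abs, mul_one]
      _ ≤ a + a := by rw [abs_sub_comm]; linarith
      _ = 2 * a := by ring
  have h4 : max δ lam * ‖ω - σ‖ ≤ 2 * a := by
    rcases max_cases δ lam with ⟨h, _⟩ | ⟨h, _⟩ <;> rw [h] <;> assumption
  linarith

private theorem st7_pointwise {n : ℕ} (hn : 1 ≤ n) (q : ℝ) (hq : 0 < q) (ω σ : Fin n → ℝ)
    (hω : ‖ω‖ = 1) (hσ : ‖σ‖ = 1) (hm : 0 < ‖ω - σ‖) (δ lam : ℝ) (hδ : 0 < δ) (hl : 0 < lam) :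
    ENNReal.ofReal (δ ^ (n-1) * lam ^ (n-1)) / (ENNReal.ofReal ‖δ • ω - lam • σ‖) ^ ((n:ℝ) + q)
      ≤ ENNReal.ofReal (((3:ℝ) ^ ((n:ℝ)+q) * ‖ω - σ‖ ^ (1-(n:ℝ)) * δ ^ ((n:ℝ)-1)) *
          (|δ - lam| + δ * ‖ω - σ‖) ^ (-(q+1))) := by
  set m := ‖ω - σ‖ with hmdef
  set a := ‖δ • ω - lam • σ‖ with hadef
  set t := |δ - lam| with htdef
  set M := max δ lam with hMdef
  have hMδ : δ ≤ M := le_max_left _ _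
  have hMl : lam ≤ M := le_max_right _ _
  have ht : (0:ℝ) ≤ t := abs_nonneg _
  have hE : (0:ℝ) < t + M * m := by
    have : 0 < M := lt_of_lt_of_le hδ hMδ
    positivity
  have hD : (0:ℝ) < t + δ * m := by positivity
  have hDE : t + δ * m ≤ t + M * m := by nlinarith
  have hgeo : t + M * m ≤ 3 * a := st7_geom ω σ hω hσ δ lam hδ.le hl.le
  have ha : (0:ℝ) < a := by linarith
  have hnr : ((n - 1 : ℕ) : ℝ) = (n:ℝ) - 1 := by
    rw [Nat.cast_sub hn, Nat.cast_one]
  have hnr1 : (0:ℝ) ≤ (n:ℝ) - 1 := by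
    have : (1:ℝ) ≤ (n:ℝ) := by exact_mod_cast hn
    linarith
  rw [ENNReal.ofReal_rpow_of_pos ha, ← ENNReal.ofReal_div_of_pos (Real.rpow_pos_of_pos ha _)]
  apply ENNReal.ofReal_le_ofReal
  have hδpow : δ ^ (n-1) = δ ^ ((n:ℝ)-1) := by rw [← Real.rpow_natCast δ (n-1), hnr]
  have hlpow : lam ^ (n-1) = lam ^ ((n:ℝ)-1) := by rw [← Real.rpow_natCast lam (n-1), hnr]
  rw [hδpow, hlpow]
  have hnq : (0:ℝ) ≤ (n:ℝ) + q := by linarith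
  calc δ ^ ((n:ℝ)-1) * lam ^ ((n:ℝ)-1) / a ^ ((n:ℝ) + q)
      ≤ δ ^ ((n:ℝ)-1) * lam ^ ((n:ℝ)-1) / ((t + M * m)/3) ^ ((n:ℝ) + q) := by
        apply div_le_div_of_nonneg_left (by positivity) (by positivity)
        exact Real.rpow_le_rpow (by positivity) (by linarith) hnq
    _ = ((3:ℝ) ^ ((n:ℝ)+q) * δ ^ ((n:ℝ)-1)) *
          ((lam / (t + M * m)) ^ ((n:ℝ)-1) * (t + M * m) ^ (-(q+1))) := by
        rw [Real.div_rpow hE.le (by norm_num : (0:ℝ) ≤ 3),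
          Real.div_rpow hl.le hE.le,
          Real.rpow_neg hE.le,
          show (n:ℝ) + q = ((n:ℝ)-1) + (q+1) by ring,
          Real.rpow_add hE]
        have h1 : (t + M * m) ^ ((n:ℝ)-1) ≠ 0 := by positivity
        have h2 : (t + M * m) ^ (q+1) ≠ 0 := by positivity
        have h3 : (3:ℝ) ^ (((n:ℝ)-1) + (q+1)) ≠ 0 := by positivity
        field_simp
    _ ≤ ((3:ℝ) ^ ((n:ℝ)+q) * δ ^ ((n:ℝ)-1)) *
          ((m⁻¹) ^ ((n:ℝ)-1) * (t + δ * m) ^ (-(q+1))) := by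
        apply mul_le_mul_of_nonneg_left _ (by positivity)
        have h1 : (lam / (t + M * m)) ^ ((n:ℝ)-1) ≤ (m⁻¹) ^ ((n:ℝ)-1) := by
          apply Real.rpow_le_rpow (by positivity) _ hnr1
          rw [inv_eq_one_div, div_le_div_iff₀ hE hm]
          nlinarith [hm.le]
        have h2 : (t + M * m) ^ (-(q+1)) ≤ (t + δ * m) ^ (-(q+1)) :=
          Real.rpow_le_rpow_of_nonpos hD hDE (by linarith)
        exact mul_le_mul h1 h2 (by positivity) (by positivity)
    _ = ((3:ℝ) ^ ((n:ℝ)+q) * m ^ (1-(n:ℝ)) * δ ^ ((n:ℝ)-1)) * (t + δ * m) ^ (-(q+1)) := by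
        rw [Real.inv_rpow hm.le, ← Real.rpow_neg hm.le,
          show -((n:ℝ)-1) = 1 - (n:ℝ) by ring]
        ring

open Set in
/-- Let `n ≥ 1`, `0 < s < 1`, `1 ≤ p < ∞` with `sp < n`.  There is a constant
`C = C(n, s, p)` such that for every `ε > 0` and all `ω, σ ∈ ℝⁿ` with `|ω| = |σ| = 1`
(sup norm, which is the norm of the Pi type `Fin n → ℝ`), the kernel
`k(ω, σ) = ∫₀^ε ∫₀^ε δ^{n−1} λ^{n−1} / |δω − λσ|^{n+sp} dδ dλ` satisfies
`k(ω, σ) ≤ C ε^{n−sp} / |ω − σ|^{n+sp−1}`. -/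
theorem statement7 (n : ℕ) (hn : 1 ≤ n) (s p : ℝ)
    (hs0 : 0 < s) (hs1 : s < 1) (hp : 1 ≤ p) (hsp : s * p < n) :
    ∃ C : ℝ, 0 < C ∧ ∀ (ε : ℝ), 0 < ε → ∀ (ω σ : Fin n → ℝ), ‖ω‖ = 1 → ‖σ‖ = 1 →
      (∫⁻ δ in Set.Ioo (0 : ℝ) ε, ∫⁻ lam in Set.Ioo (0 : ℝ) ε,
          ENNReal.ofReal (δ ^ (n - 1) * lam ^ (n - 1)) /
            (ENNReal.ofReal ‖δ • ω - lam • σ‖) ^ ((n : ℝ) + s * p)) ≤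
        ENNReal.ofReal (C * ε ^ ((n : ℝ) - s * p)) /
          (ENNReal.ofReal ‖ω - σ‖) ^ ((n : ℝ) + s * p - 1) := by
  have hq : 0 < s * p := mul_pos hs0 (by linarith)
  have hn1 : (1:ℝ) ≤ (n:ℝ) := by exact_mod_cast hn
  have hnq : s * p < (n:ℝ) := hsp
  set q := s * p with hqdef
  have hnq0 : (0:ℝ) < (n:ℝ) - q := by linarith
  refine ⟨2 * (3:ℝ) ^ ((n:ℝ) + q) / (q * ((n:ℝ) - q)), by positivity, ?_⟩
  set C := 2 * (3:ℝ) ^ ((n:ℝ) + q) / (q * ((n:ℝ) - q)) with hCdef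
  intro ε hε ω σ hω hσ
  rcases eq_or_lt_of_le (norm_nonneg (ω - σ)) with hm0 | hm
  · -- ω = σ : RHS is ⊤
    have hden : (ENNReal.ofReal ‖ω - σ‖) ^ ((n:ℝ) + q - 1) = 0 := by
      rw [← hm0, ENNReal.ofReal_zero, ENNReal.zero_rpow_of_pos (by linarith)]
    rw [hden, ENNReal.div_zero]
    · exact le_top
    · exact (ENNReal.ofReal_pos.2 (by positivity)).ne'
  · set m := ‖ω - σ‖ with hmdef
    have hq1 : (0:ℝ) < q := hq
    -- inner bound
    have inner : ∀ δ ∈ Ioo (0:ℝ) ε,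
        (∫⁻ lam in Ioo (0:ℝ) ε, ENNReal.ofReal (δ ^ (n - 1) * lam ^ (n - 1)) /
            (ENNReal.ofReal ‖δ • ω - lam • σ‖) ^ ((n : ℝ) + q))
        ≤ ENNReal.ofReal ((2 * (3:ℝ) ^ ((n:ℝ)+q) / q * m ^ (1-(n:ℝ)-q)) * δ ^ ((n:ℝ)-1-q)) := by
      intro δ hδ
      have hδ0 : 0 < δ := hδ.1
      set A := (3:ℝ) ^ ((n:ℝ)+q) * m ^ (1-(n:ℝ)) * δ ^ ((n:ℝ)-1) with hAdef
      have hA : 0 ≤ A := by positivity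
      calc (∫⁻ lam in Ioo (0:ℝ) ε, ENNReal.ofReal (δ ^ (n - 1) * lam ^ (n - 1)) /
              (ENNReal.ofReal ‖δ • ω - lam • σ‖) ^ ((n : ℝ) + q))
          ≤ ∫⁻ lam in Ioo (0:ℝ) ε,
              ENNReal.ofReal A * ENNReal.ofReal ((|δ - lam| + δ * m) ^ (-(q+1))) := by
            apply lintegral_mono_ae
            filter_upwards [ae_restrict_mem measurableSet_Ioo] with lam hlam
            rw [← ENNReal.ofReal_mul hA]
            exact st7_pointwise hn q hq ω σ hω hσ hm δ lam hδ0 hlam.1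
        _ = ENNReal.ofReal A *
              ∫⁻ lam in Ioo (0:ℝ) ε, ENNReal.ofReal ((|δ - lam| + δ * m) ^ (-(q+1))) :=
            lintegral_const_mul' _ _ ENNReal.ofReal_ne_top
        _ ≤ ENNReal.ofReal A * (2 * ENNReal.ofReal ((δ * m) ^ (-q) / q)) :=
            mul_le_mul_right (st7_I2 (δ * m) q δ ε (by positivity) hq) _
        _ = ENNReal.ofReal (A * (2 * ((δ * m) ^ (-q) / q))) := by
            rw [ENNReal.ofReal_mul hA, ← ENNReal.ofReal_ofNat 2,
              ← ENNReal.ofReal_mul (by norm_num : (0:ℝ) ≤ 2)]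
        _ = ENNReal.ofReal ((2 * (3:ℝ) ^ ((n:ℝ)+q) / q * m ^ (1-(n:ℝ)-q)) * δ ^ ((n:ℝ)-1-q)) := by
            congr 1
            rw [hAdef, Real.mul_rpow hδ0.le hm.le,
              show (n:ℝ)-1-q = ((n:ℝ)-1) + (-q) by ring, Real.rpow_add hδ0,
              show (1:ℝ)-(n:ℝ)-q = (1-(n:ℝ)) + (-q) by ring, Real.rpow_add hm]
            ring
    calc (∫⁻ δ in Ioo (0:ℝ) ε, ∫⁻ lam in Ioo (0:ℝ) ε,
            ENNReal.ofReal (δ ^ (n - 1) * lam ^ (n - 1)) /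
              (ENNReal.ofReal ‖δ • ω - lam • σ‖) ^ ((n : ℝ) + q))
        ≤ ∫⁻ δ in Ioo (0:ℝ) ε,
            ENNReal.ofReal ((2 * (3:ℝ) ^ ((n:ℝ)+q) / q * m ^ (1-(n:ℝ)-q)) * δ ^ ((n:ℝ)-1-q)) := by
          apply lintegral_mono_ae
          filter_upwards [ae_restrict_mem measurableSet_Ioo] with δ hδ
          exact inner δ hδ
      _ = ENNReal.ofReal (2 * (3:ℝ) ^ ((n:ℝ)+q) / q * m ^ (1-(n:ℝ)-q)) *
            ∫⁻ δ in Ioo (0:ℝ) ε, ENNReal.ofReal (δ ^ ((n:ℝ)-1-q)) := by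
          rw [← lintegral_const_mul' _ _ ENNReal.ofReal_ne_top]
          congr 1
          ext δ
          rw [← ENNReal.ofReal_mul (by positivity)]
      _ ≤ ENNReal.ofReal (2 * (3:ℝ) ^ ((n:ℝ)+q) / q * m ^ (1-(n:ℝ)-q)) *
            ENNReal.ofReal (ε ^ (((n:ℝ)-1-q)+1) / (((n:ℝ)-1-q)+1)) :=
          mul_le_mul_right (st7_I3 ε ((n:ℝ)-1-q) hε (by linarith)) _
      _ ≤ ENNReal.ofReal (C * ε ^ ((n : ℝ) - q)) /
            (ENNReal.ofReal m) ^ ((n : ℝ) + q - 1) := by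
          rw [ENNReal.ofReal_rpow_of_pos hm,
            ← ENNReal.ofReal_div_of_pos (Real.rpow_pos_of_pos hm _),
            ← ENNReal.ofReal_mul (by positivity)]
          apply ENNReal.ofReal_le_ofReal
          rw [show ((n:ℝ)-1-q)+1 = (n:ℝ)-q by ring]
          rw [show (1:ℝ)-(n:ℝ)-q = -((n:ℝ)+q-1) by ring, Real.rpow_neg hm.le, hCdef]
          have h1 : m ^ ((n:ℝ)+q-1) ≠ 0 := by positivity
          have h2 : (n:ℝ) - q ≠ 0 := by linarith
          have h3 : q ≠ 0 := by positivity
          apply le_of_eq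
          field_simp
end
end

section
/- Let n ≥ 1, 0 < s < 1 and 1 ≤ p < ∞ with sp < n. There is a constant C = C(n, s, p) such that for all ω, σ ∈ ℝⁿ with |σ| = 1 and 1 ≤ |ω| ≤ 3 (sup norm), one has ∫₀^1 τ^{n−1} / |ω − τσ|^{n+sp} dτ ≤ C / |ω − σ|^{n+sp−1}. -/
open MeasureTheory Filter Topology ENNReal

noncomputable section

/-- Let `n ≥ 1`, `0 < s < 1`, `1 ≤ p < ∞` with `sp < n`.  There is a constant
`C = C(n, s, p)` such that for all `ω, σ ∈ ℝⁿ` with `|σ| = 1` and `1 ≤ |ω| ≤ 3` (sup norm,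
which is the norm of the Pi type `Fin n → ℝ`),
`∫₀^1 τ^{n−1} / |ω − τσ|^{n+sp} dτ ≤ C / |ω − σ|^{n+sp−1}`. -/
theorem statement8 (n : ℕ) (hn : 1 ≤ n) (s p : ℝ)
    (hs0 : 0 < s) (hs1 : s < 1) (hp : 1 ≤ p) (hsp : s * p < n) :
    ∃ C : ℝ, 0 < C ∧ ∀ (ω σ : Fin n → ℝ), ‖σ‖ = 1 → 1 ≤ ‖ω‖ → ‖ω‖ ≤ 3 →
      (∫⁻ τ in Set.Ioo (0 : ℝ) 1,
          ENNReal.ofReal (τ ^ (n - 1)) /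
            (ENNReal.ofReal ‖ω - τ • σ‖) ^ ((n : ℝ) + s * p)) ≤
        ENNReal.ofReal C / (ENNReal.ofReal ‖ω - σ‖) ^ ((n : ℝ) + s * p - 1) := by
  set α : ℝ := (n : ℝ) + s * p with hαdef
  have hn1 : (1:ℝ) ≤ (n:ℝ) := by exact_mod_cast hn
  have hsp0 : (0:ℝ) < s * p := mul_pos hs0 (lt_of_lt_of_le one_pos hp)
  have hα1 : 1 < α := by simp only [hαdef]; linarith
  have hα0 : (0:ℝ) < α := by linarith
  have hC : (0:ℝ) < 4 ^ α / (α - 1) := div_pos (by positivity) (by linarith)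
  refine ⟨4 ^ α / (α - 1), hC, ?_⟩
  intro ω σ hσ hω1 hω3
  set e := ‖ω - σ‖ with he
  rcases eq_or_lt_of_le (norm_nonneg (ω - σ)) with h0 | he0
  · have he' : e = 0 := by rw [he, ← h0]
    rw [he', ENNReal.ofReal_zero, ENNReal.zero_rpow_of_pos (by linarith),
      ENNReal.div_zero (ENNReal.ofReal_pos.mpr hC).ne']
    exact le_top
  · have he0' : (0:ℝ) < e := he0
    -- pointwise bound
    have key : ∀ τ ∈ Set.Ioo (0:ℝ) 1,
        ENNReal.ofReal (τ ^ (n - 1)) / (ENNReal.ofReal ‖ω - τ • σ‖) ^ α ≤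
          ENNReal.ofReal (4 ^ α * ((1 - τ) + e) ^ (-α)) := by
      intro τ hτ
      obtain ⟨hτ0, hτ1⟩ := hτ
      have hb : (0:ℝ) < ((1 - τ) + e) / 4 := by
        have : (0:ℝ) < 1 - τ := by linarith
        linarith
      have hr : ((1 - τ) + e) / 4 ≤ ‖ω - τ • σ‖ := by
        have h1 : 1 - τ ≤ ‖ω - τ • σ‖ := by
          have := norm_sub_norm_le ω (τ • σ)
          rw [norm_smul, hσ, Real.norm_eq_abs, abs_of_pos hτ0, mul_one] at this
          linarith
        have h2 : e - (1 - τ) ≤ ‖ω - τ • σ‖ := by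
          have htri : ‖ω - σ‖ ≤ ‖ω - τ • σ‖ + ‖τ • σ - σ‖ := by
            have := norm_add_le (ω - τ • σ) (τ • σ - σ)
            simpa using this
          have hss : ‖τ • σ - σ‖ = 1 - τ := by
            have : τ • σ - σ = (τ - 1) • σ := by rw [sub_smul, one_smul]
            rw [this, norm_smul, hσ, Real.norm_eq_abs, mul_one,
              abs_of_neg (by linarith)]
            ring
          rw [hss, ← he] at htri
          linarith
        linarith
      calc ENNReal.ofReal (τ ^ (n - 1)) / (ENNReal.ofReal ‖ω - τ • σ‖) ^ α
          ≤ 1 / (ENNReal.ofReal (((1 - τ) + e) / 4)) ^ α := by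
            apply ENNReal.div_le_div
            · exact ENNReal.ofReal_le_one.mpr (pow_le_one₀ hτ0.le hτ1.le)
            · exact ENNReal.rpow_le_rpow (ENNReal.ofReal_le_ofReal hr) hα0.le
        _ = ENNReal.ofReal (4 ^ α * ((1 - τ) + e) ^ (-α)) := by
            rw [one_div, ← ENNReal.rpow_neg, ENNReal.ofReal_rpow_of_pos hb]
            congr 1
            rw [Real.div_rpow (by linarith) (by norm_num),
              Real.rpow_neg (by norm_num : (0:ℝ) ≤ 4)]
            field_simp
    have hmeas : Measurable fun τ : ℝ =>
        ENNReal.ofReal (4 ^ α * ((1 - τ) + e) ^ (-α)) := by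
      fun_prop
    have hcont : ContinuousOn (fun τ : ℝ => 4 ^ α * ((1 - τ) + e) ^ (-α))
        (Set.Icc 0 1) := by
      apply ContinuousOn.mul continuousOn_const
      apply ContinuousOn.rpow_const
      · fun_prop
      · intro x hx
        left
        have : (0:ℝ) ≤ 1 - x := by linarith [hx.2]
        positivity
    have hint : IntegrableOn (fun τ : ℝ => 4 ^ α * ((1 - τ) + e) ^ (-α))
        (Set.Ioo 0 1) := (hcont.integrableOn_Icc).mono_set Set.Ioo_subset_Icc_self
    have hnn : 0 ≤ᵐ[volume.restrict (Set.Ioo (0:ℝ) 1)]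
        fun τ : ℝ => 4 ^ α * ((1 - τ) + e) ^ (-α) := by
      filter_upwards [ae_restrict_mem measurableSet_Ioo] with x hx
      have h1 : (0:ℝ) < 1 - x := by linarith [hx.2]
      have : (0:ℝ) ≤ 4 ^ α * ((1 - x) + e) ^ (-α) := by positivity
      simpa using this
    -- compute the real integral
    have hIval : ∫ τ in Set.Ioo (0:ℝ) 1, ((1 - τ) + e) ^ (-α) =
        ((1 + e) ^ (-α + 1) - e ^ (-α + 1)) / (-α + 1) := by
      rw [← MeasureTheory.integral_Ioc_eq_integral_Ioo,
        ← intervalIntegral.integral_of_le (zero_le_one)]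
      have : ∀ τ : ℝ, ((1 - τ) + e) ^ (-α) = ((1 + e) - τ) ^ (-α) := by
        intro τ; ring_nf
      simp only [this]
      rw [intervalIntegral.integral_comp_sub_left (fun u => u ^ (-α)) (1 + e)]
      have h1 : (1:ℝ) + e - 1 = e := by ring
      have h2 : (1:ℝ) + e - 0 = 1 + e := by ring
      rw [h1, h2]
      rw [integral_rpow (Or.inr ⟨by linarith, ?_⟩)]
      rw [Set.uIcc_of_le (by linarith)]
      simp only [Set.mem_Icc, not_and]
      intro h; linarith
    have hIbound : ∫ τ in Set.Ioo (0:ℝ) 1, 4 ^ α * ((1 - τ) + e) ^ (-α) ≤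
        4 ^ α / (α - 1) * e ^ (1 - α) := by
      rw [MeasureTheory.integral_const_mul, hIval]
      have hB : (0:ℝ) ≤ (1 + e) ^ (-α + 1) := Real.rpow_nonneg (by linarith) _
      have h4 : (0:ℝ) ≤ (4:ℝ) ^ α := by positivity
      have heq : ((1 + e) ^ (-α + 1) - e ^ (-α + 1)) / (-α + 1) =
          (e ^ (-α + 1) - (1 + e) ^ (-α + 1)) / (α - 1) := by
        rw [div_eq_div_iff (by linarith) (by linarith)]; ring
      rw [heq]
      have h1α : -α + 1 = 1 - α := by ring
      rw [h1α]
      have hfin : (e ^ (1 - α) - (1 + e) ^ (1 - α)) / (α - 1) ≤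
          e ^ (1 - α) / (α - 1) := by
        rw [h1α] at hB
        gcongr
        · linarith
      calc 4 ^ α * ((e ^ (1 - α) - (1 + e) ^ (1 - α)) / (α - 1))
          ≤ 4 ^ α * (e ^ (1 - α) / (α - 1)) := mul_le_mul_of_nonneg_left hfin h4
        _ = 4 ^ α / (α - 1) * e ^ (1 - α) := by ring
    -- assemble
    calc (∫⁻ τ in Set.Ioo (0 : ℝ) 1,
          ENNReal.ofReal (τ ^ (n - 1)) / (ENNReal.ofReal ‖ω - τ • σ‖) ^ α)
        ≤ ∫⁻ τ in Set.Ioo (0:ℝ) 1,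
            ENNReal.ofReal (4 ^ α * ((1 - τ) + e) ^ (-α)) :=
          setLIntegral_mono hmeas key
      _ = ENNReal.ofReal (∫ τ in Set.Ioo (0:ℝ) 1, 4 ^ α * ((1 - τ) + e) ^ (-α)) :=
          (ofReal_integral_eq_lintegral_ofReal hint hnn).symm
      _ ≤ ENNReal.ofReal (4 ^ α / (α - 1) * e ^ (1 - α)) :=
          ENNReal.ofReal_le_ofReal hIbound
      _ = ENNReal.ofReal (4 ^ α / (α - 1)) / (ENNReal.ofReal e) ^ (α - 1) := by
          rw [ENNReal.ofReal_rpow_of_pos he0']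
          rw [← ENNReal.ofReal_div_of_pos (Real.rpow_pos_of_pos he0 _)]
          congr 1
          rw [← he, eq_div_iff (ne_of_gt (Real.rpow_pos_of_pos he0' _)),
            mul_assoc, ← Real.rpow_add he0']
          have h0' : (1 - α) + (α - 1) = 0 := by ring
          rw [h0', Real.rpow_zero, mul_one]
end
end

section
/- Let n ≥ 2. There is a constant C = C(n) such that for every ε > 0 and every measurable function G : ℝⁿ → [0, ∞], the quantity H := ∫_{{ω : |ω| = ε}} ∫_{{λ : |λ − ω| = ε}} G(λ) dℋ^{n−1}(λ) dℋ^{n−1}(ω) satisfies H ≤ C ( ε^{n−2} ∫_{{|λ| ≤ 2ε}} G(λ) dλ + ε^{n−1} Σ_{j=1}^{n} Σ_{q ∈ {−1,0,1}} ∫_{{λ : λ_j = 2qε, |λ̂_j| ≤ 2ε}} G(λ) dℋ^{n−1}(λ) ), where λ̂_j = (λ_1, …, λ_{j−1}, λ_{j+1}, …, λ_n). -/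
open MeasureTheory Filter Topology ENNReal

noncomputable section
namespace St9

open Set Finset

def ins (k : ℕ) (i : Fin (k+1)) (c : ℝ) (y : Fin k → ℝ) : Fin (k+1) → ℝ :=
  Fin.insertNth i c y

lemma insertNth_isometry (k : ℕ) (i : Fin (k+1)) (c : ℝ) :
    Isometry (ins k i c) := by
  intro y z
  simp only [edist_pi_def, ins]
  rw [Fin.univ_succAbove k i, Finset.sup_cons, Finset.sup_map]
  simp [Function.comp_def, Fin.insertNth_apply_same, Fin.insertNth_apply_succAbove]

lemma insertNth_range (k : ℕ) (i : Fin (k+1)) (c : ℝ) :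
    Set.range (ins k i c) = {x | x i = c} := by
  ext x
  constructor
  · rintro ⟨y, rfl⟩; simp [ins, Fin.insertNth_apply_same]
  · intro hx
    exact ⟨i.removeNth x, by rw [ins, ← hx]; exact Fin.insertNth_self_removeNth i x⟩

lemma insertNth_measurableEmbedding (k : ℕ) (i : Fin (k+1)) (c : ℝ) :
    MeasurableEmbedding (ins k i c) :=
  ((insertNth_isometry k i c).isClosedEmbedding).measurableEmbedding

lemma hausdorff_pi (k : ℕ) : (μH[(k:ℝ)] : Measure (Fin k → ℝ)) = volume := by
  simpa using (hausdorffMeasure_pi_real (ι := Fin k))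

lemma hyper_restrict (k : ℕ) (i : Fin (k+1)) (c : ℝ) :
    (μH[(k:ℝ)] : Measure (Fin (k+1) → ℝ)).restrict {x | x i = c}
      = Measure.map (ins k i c) volume := by
  refine Measure.ext fun s hs => ?_
  rw [Measure.restrict_apply hs, (insertNth_measurableEmbedding k i c).map_apply]
  have h1 : s ∩ {x | x i = c} = ins k i c '' (ins k i c ⁻¹' s) := by
    rw [Set.image_preimage_eq_inter_range, insertNth_range]
  rw [h1, (insertNth_isometry k i c).hausdorffMeasure_image (Or.inl (by positivity)),
    hausdorff_pi]

lemma hyper_lintegral (k : ℕ) (i : Fin (k+1)) (c : ℝ) {S : Set (Fin (k+1) → ℝ)}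
    (hS : MeasurableSet S) (hSsub : S ⊆ {x | x i = c}) (f : (Fin (k+1) → ℝ) → ℝ≥0∞) :
    ∫⁻ x in S, f x ∂(μH[(k:ℝ)]) = ∫⁻ y in ins k i c ⁻¹' S, f (ins k i c y) := by
  have h1 : (μH[(k:ℝ)] : Measure (Fin (k+1) → ℝ)).restrict S
      = ((μH[(k:ℝ)] : Measure (Fin (k+1) → ℝ)).restrict {x | x i = c}).restrict S := by
    rw [Measure.restrict_restrict hS, Set.inter_eq_self_of_subset_left hSsub]
  rw [h1, hyper_restrict, Measure.restrict_map (insertNth_measurableEmbedding k i c).measurable hS,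
    (insertNth_measurableEmbedding k i c).lintegral_map]

lemma measurable_ins_pair (k : ℕ) (i : Fin (k+1)) :
    Measurable (fun p : ℝ × (Fin k → ℝ) => ins k i p.1 p.2) :=
  (MeasurableEquiv.piFinSuccAbove (fun _ => ℝ) i).symm.measurable

lemma pi_split (k : ℕ) (i : Fin (k+1)) (F : (Fin (k+1) → ℝ) → ℝ≥0∞) (hF : Measurable F) :
    ∫⁻ x, F x = ∫⁻ u : ℝ, ∫⁻ y : Fin k → ℝ, F (ins k i u y) := by
  have mp := measurePreserving_piFinSuccAbove (fun _ : Fin (k+1) => (volume : Measure ℝ)) i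
  have h0 : (volume : Measure (Fin (k+1) → ℝ)) = Measure.pi fun _ => volume := volume_pi
  have h1 : (volume : Measure (Fin k → ℝ)) = Measure.pi fun _ => volume := volume_pi
  calc ∫⁻ x, F x ∂volume
      = ∫⁻ p, F ((MeasurableEquiv.piFinSuccAbove (fun _ => ℝ) i).symm p)
          ∂((volume : Measure ℝ).prod (Measure.pi fun _ => volume)) := by
        rw [h0, ← ((mp.symm _).lintegral_comp hF)]
    _ = ∫⁻ p : ℝ × (Fin k → ℝ), F (ins k i p.1 p.2)
          ∂((volume : Measure ℝ).prod volume) := by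
        rw [h1]; rfl
    _ = ∫⁻ u : ℝ, ∫⁻ y : Fin k → ℝ, F (ins k i u y) := by
        exact lintegral_prod _ (hF.comp (measurable_ins_pair k i)).aemeasurable

/-- cube measurability -/
lemma meas_cube (k : ℕ) (r : ℝ) : MeasurableSet {y : Fin k → ℝ | ∀ l, |y l| ≤ r} := by
  have : {y : Fin k → ℝ | ∀ l, |y l| ≤ r} = ⋂ l, {y | |y l| ≤ r} := by ext; simp
  rw [this]
  exact MeasurableSet.iInter fun l =>
    measurableSet_le ((measurable_pi_apply l).abs) measurable_const

lemma meas_face (k : ℕ) (i : Fin k) (c r : ℝ) :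
    MeasurableSet {x : Fin k → ℝ | x i = c ∧ ∀ l, |x l| ≤ r} := by
  have : {x : Fin k → ℝ | x i = c ∧ ∀ l, |x l| ≤ r}
      = ((fun x : Fin k → ℝ => x i) ⁻¹' {c}) ∩ {y | ∀ l, |y l| ≤ r} := by ext; simp
  rw [this]
  exact ((measurable_pi_apply i) (measurableSet_singleton c)).inter (meas_cube k r)

lemma meas_slab (k : ℕ) (i : Fin k) (c r : ℝ) :
    MeasurableSet {x : Fin k → ℝ | x i = c ∧ ∀ l, l ≠ i → |x l| ≤ r} := by
  have : {x : Fin k → ℝ | x i = c ∧ ∀ l, l ≠ i → |x l| ≤ r}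
      = ((fun x : Fin k → ℝ => x i) ⁻¹' {c}) ∩ ⋂ l, {x | l ≠ i → |x l| ≤ r} := by ext; simp
  rw [this]
  refine ((measurable_pi_apply i) (measurableSet_singleton c)).inter
    (MeasurableSet.iInter fun l => ?_)
  by_cases hl : l = i
  · simp [hl]
  · have : {x : Fin k → ℝ | l ≠ i → |x l| ≤ r} = {x | |x l| ≤ r} := by ext; simp [hl]
    rw [this]
    exact measurableSet_le ((measurable_pi_apply l).abs) measurable_const

lemma cube_vol (k : ℕ) (r : ℝ) :
    volume {y : Fin k → ℝ | ∀ l, |y l| ≤ r} = ENNReal.ofReal (2*r) ^ k := by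
  have h1 : {y : Fin k → ℝ | ∀ l, |y l| ≤ r} = Set.pi Set.univ (fun _ => Icc (-r) r) := by
    ext y; simp [abs_le, Set.mem_pi, Set.mem_Icc, Pi.le_def, forall_and]
  rw [h1, volume_pi_pi]
  simp [Real.volume_Icc]
  congr 1
  rw [← two_mul, ENNReal.ofReal_mul (by norm_num : (0:ℝ) ≤ 2)]; simp

lemma pre_face (k : ℕ) (i : Fin (k+1)) (c r : ℝ) (hc : |c| ≤ r) :
    ins k i c ⁻¹' {x | x i = c ∧ ∀ l, |x l| ≤ r} = {y | ∀ l, |y l| ≤ r} := by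
  ext y
  simp only [Set.mem_preimage, Set.mem_setOf_eq, ins, Fin.insertNth_apply_same, true_and]
  rw [Fin.forall_iff_succAbove i]
  simp [Fin.insertNth_apply_same, Fin.insertNth_apply_succAbove, hc]

lemma pre_slab (k : ℕ) (i : Fin (k+1)) (c r : ℝ) :
    ins k i c ⁻¹' {x | x i = c ∧ ∀ l, l ≠ i → |x l| ≤ r} = {y | ∀ l, |y l| ≤ r} := by
  ext y
  simp only [Set.mem_preimage, Set.mem_setOf_eq, ins, Fin.insertNth_apply_same, true_and]
  constructor
  · intro h l
    have := h (i.succAbove l) (Fin.succAbove_ne i l)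
    simpa [Fin.insertNth_apply_succAbove] using this
  · intro h l hl
    obtain ⟨l', rfl⟩ := Fin.exists_succAbove_eq hl
    simpa [Fin.insertNth_apply_succAbove] using h l'

/-- covering of the sup-norm sphere -/
lemma cover (k : ℕ) (r : ℝ) (hr : 0 < r) (x : Fin (k+1) → ℝ) (hx : ‖x‖ = r) :
    ∃ j, ∃ s : Bool, x j = (if s then (1:ℝ) else -1) * r ∧ ∀ l, |x l| ≤ r := by
  have hall : ∀ l, |x l| ≤ r := fun l => by
    have := norm_le_pi_norm x l
    rwa [hx, Real.norm_eq_abs] at this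
  obtain ⟨j, -, hj⟩ := Finset.exists_mem_eq_sup (Finset.univ : Finset (Fin (k+1)))
    Finset.univ_nonempty (fun i => ‖x i‖₊)
  have hnorm : ‖x‖ = |x j| := by
    rw [Pi.norm_def, hj]
    simp [Real.norm_eq_abs, coe_nnnorm]
  have habs : |x j| = r := by rw [← hnorm, hx]
  rcases (abs_eq hr.le).mp habs with h | h
  · exact ⟨j, true, by simpa using h, hall⟩
  · exact ⟨j, false, by simpa using h, hall⟩

lemma eval_cube (k : ℕ) (k₀ : Fin (k+1)) (r : ℝ) (g : ℝ → ℝ≥0∞) (hg : Measurable g) :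
    ∫⁻ y in {y : Fin (k+1) → ℝ | ∀ l, |y l| ≤ r}, g (y k₀) ∂volume
      = ENNReal.ofReal (2*r) ^ k * ∫⁻ u in Icc (-r) r, g u := by
  rw [← lintegral_indicator (meas_cube (k+1) r)]
  rw [pi_split k k₀ _ ((show Measurable fun y : Fin (k+1) → ℝ => g (y k₀) from
      hg.comp (measurable_pi_apply k₀)).indicator (meas_cube (k+1) r))]
  have key : ∀ u (z : Fin k → ℝ),
      ({y : Fin (k+1) → ℝ | ∀ l, |y l| ≤ r}.indicator (fun y => g (y k₀)) (ins k k₀ u z))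
      = (Icc (-r) r).indicator g u * ({y : Fin k → ℝ | ∀ l, |y l| ≤ r}).indicator
          (fun _ => (1:ℝ≥0∞)) z := by
    intro u z
    have hmem : (ins k k₀ u z ∈ {y : Fin (k+1) → ℝ | ∀ l, |y l| ≤ r})
        ↔ (|u| ≤ r ∧ ∀ l, |z l| ≤ r) := by
      simp only [Set.mem_setOf_eq]
      rw [Fin.forall_iff_succAbove k₀]
      simp [ins, Fin.insertNth_apply_same, Fin.insertNth_apply_succAbove]
    by_cases h1 : |u| ≤ r
    · by_cases h2 : ∀ l, |z l| ≤ r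
      · rw [Set.indicator_of_mem (hmem.mpr ⟨h1, h2⟩),
          Set.indicator_of_mem (show u ∈ Icc (-r) r from abs_le.mp h1),
          Set.indicator_of_mem (show z ∈ {y : Fin k → ℝ | ∀ l, |y l| ≤ r} from h2)]
        simp [ins, Fin.insertNth_apply_same]
      · rw [Set.indicator_of_notMem (fun hc => h2 (hmem.mp hc).2),
          Set.indicator_of_notMem (show z ∉ {y : Fin k → ℝ | ∀ l, |y l| ≤ r} from h2)]
        simp
    · rw [Set.indicator_of_notMem (fun hc => h1 (hmem.mp hc).1),
        Set.indicator_of_notMem (show u ∉ Icc (-r) r from fun hc => h1 (abs_le.mpr hc))]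
      simp
  simp_rw [key]
  have hmeas2 : Measurable (({y : Fin k → ℝ | ∀ l, |y l| ≤ r}).indicator
      (fun _ => (1:ℝ≥0∞))) := measurable_const.indicator (meas_cube k r)
  have h2 : ∫⁻ z : Fin k → ℝ, ({y : Fin k → ℝ | ∀ l, |y l| ≤ r}).indicator
      (fun _ => (1:ℝ≥0∞)) z = ENNReal.ofReal (2*r) ^ k := by
    rw [lintegral_indicator (meas_cube k r)]
    simp [cube_vol k r]
  rw [lintegral_congr fun u => lintegral_const_mul _ hmeas2]
  rw [lintegral_congr fun u => by rw [h2]]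
  rw [lintegral_mul_const _ (hg.indicator measurableSet_Icc),
    lintegral_indicator measurableSet_Icc, mul_comm]

lemma shift_Icc (g : ℝ → ℝ≥0∞) (a r : ℝ) :
    ∫⁻ u in Icc (-r) r, g (u + a) = ∫⁻ u in Icc (a - r) (a + r), g u := by
  rw [← lintegral_indicator measurableSet_Icc, ← lintegral_indicator measurableSet_Icc]
  have key : ∀ u, (Icc (-r) r).indicator (fun u => g (u + a)) u
      = (Icc (a - r) (a + r)).indicator g (u + a) := by
    intro u
    have : u ∈ Icc (-r) r ↔ u + a ∈ Icc (a - r) (a + r) := by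
      simp only [Set.mem_Icc]; constructor <;> intro h <;> constructor <;> linarith [h.1, h.2]
    by_cases h : u ∈ Icc (-r) r
    · rw [Set.indicator_of_mem h, Set.indicator_of_mem (this.mp h)]
    · rw [Set.indicator_of_notMem h, Set.indicator_of_notMem (fun hc => h (this.mpr hc))]
  simp_rw [key]
  exact lintegral_add_right_eq_self (fun v => (Icc (a - r) (a + r)).indicator g v) a

lemma cube_split (k : ℕ) (i : Fin (k+1)) (r : ℝ) (G : (Fin (k+1) → ℝ) → ℝ≥0∞)
    (hG : Measurable G) :
    ∫⁻ u in Icc (-r) r, (∫⁻ y in {y : Fin k → ℝ | ∀ l, |y l| ≤ r}, G (ins k i u y))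
      = ∫⁻ x in {x : Fin (k+1) → ℝ | ∀ l, |x l| ≤ r}, G x := by
  rw [← lintegral_indicator (meas_cube (k+1) r),
    pi_split k i _ (hG.indicator (meas_cube (k+1) r))]
  have key : ∀ u, (∫⁻ y, ({x : Fin (k+1) → ℝ | ∀ l, |x l| ≤ r}).indicator G (ins k i u y))
      = (Icc (-r) r).indicator
          (fun u => ∫⁻ y in {y : Fin k → ℝ | ∀ l, |y l| ≤ r}, G (ins k i u y)) u := by
    intro u
    have hmem : ∀ z : Fin k → ℝ, (ins k i u z ∈ {x : Fin (k+1) → ℝ | ∀ l, |x l| ≤ r})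
        ↔ (|u| ≤ r ∧ ∀ l, |z l| ≤ r) := by
      intro z
      simp only [Set.mem_setOf_eq]
      rw [Fin.forall_iff_succAbove i]
      simp [ins, Fin.insertNth_apply_same, Fin.insertNth_apply_succAbove]
    by_cases h1 : |u| ≤ r
    · rw [Set.indicator_of_mem (by simp [Set.mem_Icc, abs_le.mp h1])]
      rw [← lintegral_indicator (meas_cube k r)]
      congr 1 with z
      by_cases h2 : ∀ l, |z l| ≤ r
      · rw [Set.indicator_of_mem ((hmem z).mpr ⟨h1, h2⟩),
          Set.indicator_of_mem (show z ∈ {y : Fin k → ℝ | ∀ l, |y l| ≤ r} from h2)]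
      · rw [Set.indicator_of_notMem (fun hc => h2 ((hmem z).mp hc).2),
          Set.indicator_of_notMem (show z ∉ {y : Fin k → ℝ | ∀ l, |y l| ≤ r} from h2)]
    · have hu : u ∉ Icc (-r) r := fun hc => h1 (abs_le.mpr ⟨hc.1, hc.2⟩)
      rw [Set.indicator_of_notMem hu]
      have hz : ∀ z : Fin k → ℝ,
          ({x : Fin (k+1) → ℝ | ∀ l, |x l| ≤ r}).indicator G (ins k i u z) = 0 :=
        fun z => Set.indicator_of_notMem (fun hc => h1 ((hmem z).mp hc).1) _
      simp_rw [hz]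
      exact lintegral_zero
  simp_rw [key]
  rw [lintegral_indicator measurableSet_Icc]



/-! ## Main setup -/

def μm (m : ℕ) : Measure (Fin (m+2) → ℝ) := μH[((m+1:ℕ):ℝ)]

def cc (ε : ℝ) (s : Bool) : ℝ := (if s then (1:ℝ) else -1) * ε

lemma cc_abs (ε : ℝ) (hε : 0 < ε) (s : Bool) : |cc ε s| ≤ ε := by
  cases s <;> simp [cc, abs_of_nonneg hε.le]

def OFace (m : ℕ) (ε : ℝ) (j : Fin (m+2)) (s : Bool) : Set (Fin (m+2) → ℝ) :=
  {ω | ω j = cc ε s ∧ ∀ l, |ω l| ≤ ε}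

def BSet (m : ℕ) (i : Fin (m+2)) (c r : ℝ) : Set (Fin (m+2) → ℝ) :=
  {x | x i = c ∧ ∀ l, l ≠ i → |x l| ≤ r}

def hI (m : ℕ) (ε : ℝ) (G : (Fin (m+2) → ℝ) → ℝ≥0∞) (i : Fin (m+2)) (c : ℝ) : ℝ≥0∞ :=
  ∫⁻ y in {y : Fin (m+1) → ℝ | ∀ l, |y l| ≤ 2*ε}, G (ins (m+1) i c y)

def Icube (m : ℕ) (ε : ℝ) (G : (Fin (m+2) → ℝ) → ℝ≥0∞) : ℝ≥0∞ :=
  ∫⁻ lam in {lam : Fin (m+2) → ℝ | ‖lam‖ ≤ 2*ε}, G lam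

lemma norm_cube_eq (k : ℕ) (r : ℝ) (hr : 0 ≤ r) :
    {x : Fin k → ℝ | ∀ l, |x l| ≤ r} = {x : Fin k → ℝ | ‖x‖ ≤ r} := by
  ext x
  rw [Set.mem_setOf_eq, Set.mem_setOf_eq, pi_norm_le_iff_of_nonneg hr]
  simp [Real.norm_eq_abs]

/-- the slab integral over `BSet` equals the `hI` form -/
lemma BSet_lintegral (m : ℕ) (ε : ℝ) (G : (Fin (m+2) → ℝ) → ℝ≥0∞)
    (i : Fin (m+2)) (c : ℝ) :
    (∫⁻ lam in BSet m i c (2*ε), G lam ∂(μm m)) = hI m ε G i c := by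
  rw [μm, BSet, hyper_lintegral (m+1) i c (meas_slab (m+2) i c (2*ε)) (fun x hx => hx.1) G,
    pre_slab, hI]

lemma hI_measurable (m : ℕ) (ε c' : ℝ) (G : (Fin (m+2) → ℝ) → ℝ≥0∞) (hG : Measurable G)
    (i : Fin (m+2)) :
    Measurable (fun u : ℝ => hI m ε G i (u + c')) := by
  have h1 : ∀ u : ℝ, hI m ε G i (u + c')
      = ∫⁻ y, ({y : Fin (m+1) → ℝ | ∀ l, |y l| ≤ 2*ε}).indicator
          (fun y => G (ins (m+1) i (u + c') y)) y := fun u =>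
    (lintegral_indicator (meas_cube (m+1) (2*ε)) _).symm
  simp_rw [h1]
  apply Measurable.lintegral_prod_right
    (f := fun (u : ℝ) (y : Fin (m+1) → ℝ) =>
      ({y : Fin (m+1) → ℝ | ∀ l, |y l| ≤ 2*ε}).indicator
        (fun y => G (ins (m+1) i (u + c') y)) y)
  have h2 : Function.uncurry (fun (u : ℝ) (y : Fin (m+1) → ℝ) =>
      ({y : Fin (m+1) → ℝ | ∀ l, |y l| ≤ 2*ε}).indicator
        (fun y => G (ins (m+1) i (u + c') y)) y)
      = (Set.univ ×ˢ {y : Fin (m+1) → ℝ | ∀ l, |y l| ≤ 2*ε}).indicator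
          (fun p : ℝ × (Fin (m+1) → ℝ) => G (ins (m+1) i (p.1 + c') p.2)) := by
    ext p
    by_cases h : p.2 ∈ {y : Fin (m+1) → ℝ | ∀ l, |y l| ≤ 2*ε}
    · rw [Function.uncurry, Set.indicator_of_mem h,
        Set.indicator_of_mem (Set.mem_prod.mpr ⟨Set.mem_univ _, h⟩)]
    · rw [Function.uncurry, Set.indicator_of_notMem h,
        Set.indicator_of_notMem (fun hc => h (Set.mem_prod.mp hc).2)]
  rw [h2]
  exact (hG.comp ((measurable_ins_pair (m+1) i).comp
    ((measurable_fst.add_const c').prodMk measurable_snd))).indicator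
    (MeasurableSet.univ.prod (meas_cube (m+1) (2*ε)))

/-- Step D: the (i ≠ j) face integrals -/
lemma faceH_le (m : ℕ) (ε : ℝ) (hε : 0 < ε) (G : (Fin (m+2) → ℝ) → ℝ≥0∞)
    (hG : Measurable G) (j i : Fin (m+2)) (hij : i ≠ j) (s t : Bool) :
    ∫⁻ ω in OFace m ε j s, hI m ε G i (ω i + cc ε t) ∂(μm m)
      ≤ ENNReal.ofReal (2*ε) ^ m * Icube m ε G := by
  obtain ⟨k₀, hk₀⟩ := Fin.exists_succAbove_eq hij
  rw [μm, OFace, hyper_lintegral (m+1) j (cc ε s) (meas_face (m+2) j (cc ε s) ε)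
    (fun x hx => hx.1) _, pre_face (m+1) j (cc ε s) ε (cc_abs ε hε s)]
  have hins : ∀ y : Fin (m+1) → ℝ, (ins (m+1) j (cc ε s) y) i = y k₀ := by
    intro y
    rw [← hk₀, ins]
    exact Fin.insertNth_apply_succAbove (α := fun _ : Fin (m+2) => ℝ) j (cc ε s) y k₀
  simp_rw [hins]
  rw [eval_cube m k₀ ε (fun u => hI m ε G i (u + cc ε t)) (hI_measurable m ε (cc ε t) G hG i)]
  have step1 : ∫⁻ u in Icc (-ε) ε, hI m ε G i (u + cc ε t)
      = ∫⁻ u in Icc (cc ε t - ε) (cc ε t + ε), hI m ε G i u :=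
    shift_Icc (hI m ε G i) (cc ε t) ε
  have step2 : (∫⁻ u in Icc (cc ε t - ε) (cc ε t + ε), hI m ε G i u)
      ≤ ∫⁻ u in Icc (-(2*ε)) (2*ε), hI m ε G i u := by
    refine lintegral_mono_set (Set.Icc_subset_Icc ?_ ?_) <;>
      have := abs_le.mp (cc_abs ε hε t) <;> [linarith [this.1]; linarith [this.2]]
  have step3 : (∫⁻ u in Icc (-(2*ε)) (2*ε), hI m ε G i u) = Icube m ε G := by
    unfold hI Icube
    rw [cube_split (m+1) i (2*ε) G hG, norm_cube_eq (m+2) (2*ε) (by positivity)]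
  rw [step1]
  exact mul_le_mul_right (step2.trans (le_of_eq step3)) _

lemma OFace_vol (m : ℕ) (ε : ℝ) (hε : 0 < ε) (j : Fin (m+2)) (s : Bool) :
    μm m (OFace m ε j s) = ENNReal.ofReal (2*ε) ^ (m+1) := by
  have h1 := hyper_lintegral (m+1) j (cc ε s) (meas_face (m+2) j (cc ε s) ε)
    (fun x (hx : x ∈ OFace m ε j s) => hx.1) (fun _ => (1:ℝ≥0∞))
  rw [setLIntegral_one, setLIntegral_one,
    pre_face (m+1) j (cc ε s) ε (cc_abs ε hε s)] at h1
  unfold μm OFace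
  rw [h1, cube_vol (m+1) ε]

def qq (s t : Bool) : ℤ := if s = t then (if s then 1 else -1) else 0

lemma qq_mem (s t : Bool) : qq s t ∈ ({-1, 0, 1} : Finset ℤ) := by
  cases s <;> cases t <;> decide

lemma qq_val (ε : ℝ) (s t : Bool) : 2*((qq s t : ℤ):ℝ)*ε = cc ε s + cc ε t := by
  cases s <;> cases t <;> simp [qq, cc] <;> ring

lemma inner_bound (m : ℕ) (ε : ℝ) (hε : 0 < ε) (G : (Fin (m+2) → ℝ) → ℝ≥0∞)
    (j : Fin (m+2)) (s : Bool) :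
    ∀ ω ∈ OFace m ε j s,
    (∫⁻ lam in {lam : Fin (m+2) → ℝ | ‖lam - ω‖ = ε}, G lam ∂(μm m))
      ≤ (∑ t : Bool, ∫⁻ lam in BSet m j (2*((qq s t : ℤ):ℝ)*ε) (2*ε), G lam ∂(μm m))
        + ∑ i ∈ Finset.univ.erase j, ∑ t : Bool, hI m ε G i (ω i + cc ε t) := by
  intro ω hω
  obtain ⟨hωj, hωall⟩ := hω
  have hsub : {lam : Fin (m+2) → ℝ | ‖lam - ω‖ = ε} ⊆
      ⋃ p : Fin (m+2) × Bool,
        {lam | lam p.1 = ω p.1 + cc ε p.2 ∧ ∀ l, |lam l - ω l| ≤ ε} := by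
    intro lam hlam
    obtain ⟨i, t, h1, h2⟩ := cover (m+1) ε hε (lam - ω) hlam
    refine Set.mem_iUnion.mpr ⟨(i, t), ?_, fun l => ?_⟩
    · have h1' : lam i - ω i = cc ε t := by simpa [cc] using h1
      simp only
      linarith
    · simpa using h2 l
  refine le_trans (lintegral_mono_set hsub) ?_
  refine le_trans (lintegral_iUnion_le _ _) ?_
  rw [tsum_fintype, Fintype.sum_prod_type, ← Finset.add_sum_erase _ _ (Finset.mem_univ j)]
  refine add_le_add (Finset.sum_le_sum fun t _ => ?_)
    (Finset.sum_le_sum fun i hi => Finset.sum_le_sum fun t _ => ?_)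
  · refine lintegral_mono_set ?_
    rintro lam ⟨h1, h2⟩
    refine ⟨?_, fun l _ => ?_⟩
    · rw [h1, hωj, qq_val]
    · have ha := h2 l
      have hb := hωall l
      have hc : |lam l| - |ω l| ≤ |lam l - ω l| := abs_sub_abs_le_abs_sub _ _
      linarith
  · refine le_trans (lintegral_mono_set ?_) (le_of_eq (BSet_lintegral m ε G i (ω i + cc ε t)))
    rintro lam ⟨h1, h2⟩
    refine ⟨h1, fun l _ => ?_⟩
    have ha := h2 l
    have hb := hωall l
    have hc : |lam l| - |ω l| ≤ |lam l - ω l| := abs_sub_abs_le_abs_sub _ _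
    linarith

lemma face_bound (m : ℕ) (ε : ℝ) (hε : 0 < ε) (G : (Fin (m+2) → ℝ) → ℝ≥0∞)
    (hG : Measurable G) (j : Fin (m+2)) (s : Bool) :
    (∫⁻ ω in OFace m ε j s,
        (∫⁻ lam in {lam : Fin (m+2) → ℝ | ‖lam - ω‖ = ε}, G lam ∂(μm m)) ∂(μm m))
      ≤ (∑ t : Bool, ∫⁻ lam in BSet m j (2*((qq s t : ℤ):ℝ)*ε) (2*ε), G lam ∂(μm m))
            * ENNReal.ofReal (2*ε) ^ (m+1)
        + ∑ i ∈ Finset.univ.erase j, ∑ t : Bool,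
            ENNReal.ofReal (2*ε) ^ m * Icube m ε G := by
  have hmeas : ∀ i : Fin (m+2), ∀ t : Bool,
      Measurable fun ω : Fin (m+2) → ℝ => hI m ε G i (ω i + cc ε t) := fun i t =>
    (hI_measurable m ε (cc ε t) G hG i).comp (measurable_pi_apply i)
  have hmeasg : Measurable (fun ω : Fin (m+2) → ℝ =>
      (∑ t : Bool, ∫⁻ lam in BSet m j (2*((qq s t : ℤ):ℝ)*ε) (2*ε), G lam ∂(μm m))
        + ∑ i ∈ Finset.univ.erase j, ∑ t : Bool, hI m ε G i (ω i + cc ε t)) := by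
    refine Measurable.add measurable_const ?_
    refine Finset.measurable_sum _ fun i _ => ?_
    exact Finset.measurable_sum _ fun t _ => hmeas i t
  refine le_trans (setLIntegral_mono hmeasg (inner_bound m ε hε G j s)) ?_
  rw [lintegral_add_left measurable_const, setLIntegral_const, OFace_vol m ε hε j s]
  refine add_le_add le_rfl ?_
  rw [lintegral_finset_sum _ fun i _ => Finset.measurable_sum _ fun t _ => hmeas i t]
  refine Finset.sum_le_sum fun i hi => ?_
  rw [lintegral_finset_sum _ fun t _ => hmeas i t]
  exact Finset.sum_le_sum fun t _ =>
    faceH_le m ε hε G hG j i (Finset.ne_of_mem_erase hi) s t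

lemma st9key (m : ℕ) (ε : ℝ) (hε : 0 < ε) (G : (Fin (m+2) → ℝ) → ℝ≥0∞)
    (hG : Measurable G) :
    (∫⁻ ω in {ω : Fin (m+2) → ℝ | ‖ω‖ = ε},
        (∫⁻ lam in {lam : Fin (m+2) → ℝ | ‖lam - ω‖ = ε}, G lam ∂(μm m)) ∂(μm m))
      ≤ (((4*(m+2)^2 : ℕ) : ℝ≥0∞) * ENNReal.ofReal (2*ε) ^ m) * Icube m ε G
        + (4 * ENNReal.ofReal (2*ε) ^ (m+1)) *
            ∑ j : Fin (m+2), ∑ q ∈ ({-1, 0, 1} : Finset ℤ),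
              ∫⁻ lam in BSet m j (2*(q:ℝ)*ε) (2*ε), G lam ∂(μm m) := by
  set c0 : ℝ≥0∞ := ENNReal.ofReal (2*ε) ^ m with hc0
  set c1 : ℝ≥0∞ := ENNReal.ofReal (2*ε) ^ (m+1) with hc1
  set SA : Fin (m+2) → ℝ≥0∞ := fun j => ∑ q ∈ ({-1, 0, 1} : Finset ℤ),
    ∫⁻ lam in BSet m j (2*(q:ℝ)*ε) (2*ε), G lam ∂(μm m) with hSA
  set D : ℝ≥0∞ := ((m+1 : ℕ) : ℝ≥0∞) * (2 * (c0 * Icube m ε G)) with hD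
  have stepA : (∫⁻ ω in {ω : Fin (m+2) → ℝ | ‖ω‖ = ε},
      (∫⁻ lam in {lam : Fin (m+2) → ℝ | ‖lam - ω‖ = ε}, G lam ∂(μm m)) ∂(μm m))
      ≤ ∑ j : Fin (m+2), ∑ s : Bool, ∫⁻ ω in OFace m ε j s,
          (∫⁻ lam in {lam : Fin (m+2) → ℝ | ‖lam - ω‖ = ε}, G lam ∂(μm m)) ∂(μm m) := by
    have hsub : {ω : Fin (m+2) → ℝ | ‖ω‖ = ε}
        ⊆ ⋃ p : Fin (m+2) × Bool, OFace m ε p.1 p.2 := by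
      intro ω hω
      obtain ⟨j, s, h1, h2⟩ := cover (m+1) ε hε ω hω
      exact Set.mem_iUnion.mpr ⟨(j, s), h1, h2⟩
    refine le_trans (lintegral_mono_set hsub) ?_
    refine le_trans (lintegral_iUnion_le _ _) ?_
    rw [tsum_fintype]
    exact le_of_eq (Fintype.sum_prod_type _)
  have main : ∀ j s, (∫⁻ ω in OFace m ε j s,
      (∫⁻ lam in {lam : Fin (m+2) → ℝ | ‖lam - ω‖ = ε}, G lam ∂(μm m)) ∂(μm m))
      ≤ 2 * SA j * c1 + D := by
    intro j s
    refine (face_bound m ε hε G hG j s).trans (add_le_add ?_ ?_)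
    · refine mul_le_mul_left ?_ c1
      have hA : ∀ t : Bool,
          (∫⁻ lam in BSet m j (2*((qq s t : ℤ):ℝ)*ε) (2*ε), G lam ∂(μm m)) ≤ SA j := by
        intro t
        rw [hSA]
        exact Finset.single_le_sum
          (f := fun q : ℤ => ∫⁻ lam in BSet m j (2*(q:ℝ)*ε) (2*ε), G lam ∂(μm m))
          (fun q _ => zero_le) (qq_mem s t)
      have h2 : (2:ℝ≥0∞) * SA j = SA j + SA j := two_mul _
      rw [Fintype.sum_bool, h2]
      exact add_le_add (hA true) (hA false)
    · refine le_of_eq ?_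
      rw [Finset.sum_congr rfl (fun i _ => Finset.sum_const (c0 * Icube m ε G)),
        Finset.sum_const, Finset.card_erase_of_mem (Finset.mem_univ j), Finset.card_univ,
        Fintype.card_fin, Finset.card_univ]
      have hb : Fintype.card Bool = 2 := rfl
      have h21 : m + 2 - 1 = m + 1 := rfl
      rw [hb, h21, hD]
      simp only [nsmul_eq_mul]
      push_cast
      ring
  refine stepA.trans ?_
  calc (∑ j : Fin (m+2), ∑ s : Bool, ∫⁻ ω in OFace m ε j s,
          (∫⁻ lam in {lam : Fin (m+2) → ℝ | ‖lam - ω‖ = ε}, G lam ∂(μm m)) ∂(μm m))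
      ≤ ∑ _j : Fin (m+2), ∑ _s : Bool, (2 * SA _j * c1 + D) :=
        Finset.sum_le_sum fun j _ => Finset.sum_le_sum fun s _ => main j s
    _ = 4 * c1 * (∑ j, SA j) + ((m+2 : ℕ) : ℝ≥0∞) * (2 * D) := by
        have h1 : ∀ j : Fin (m+2), (∑ _s : Bool, (2 * SA j * c1 + D))
            = 4 * c1 * SA j + 2 * D := by
          intro j; rw [Fintype.sum_bool]; ring
        simp_rw [h1]
        rw [Finset.sum_add_distrib, ← Finset.mul_sum, Finset.sum_const, Finset.card_univ,
          Fintype.card_fin, nsmul_eq_mul]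
    _ ≤ 4 * c1 * (∑ j, SA j) + ((4*(m+2)^2 : ℕ) : ℝ≥0∞) * c0 * Icube m ε G := by
        refine add_le_add_right ?_ _
        rw [hD]
        calc ((m+2:ℕ):ℝ≥0∞) * (2 * (((m+1:ℕ):ℝ≥0∞) * (2 * (c0 * Icube m ε G))))
            = (((m+2)*(m+1)*4 : ℕ) : ℝ≥0∞) * (c0 * Icube m ε G) := by push_cast; ring
          _ ≤ ((4*(m+2)^2 : ℕ) : ℝ≥0∞) * (c0 * Icube m ε G) := by
              refine mul_le_mul_left (Nat.cast_le.mpr (by nlinarith)) _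
          _ = ((4*(m+2)^2 : ℕ) : ℝ≥0∞) * c0 * Icube m ε G := by ring
    _ = (((4*(m+2)^2 : ℕ) : ℝ≥0∞) * c0) * Icube m ε G + (4 * c1) * ∑ j, SA j := by
        rw [add_comm]

end St9

/-- Let `n ≥ 2`.  There is a constant `C = C(n)` such that for every `ε > 0`
and every measurable `G : ℝⁿ → [0, ∞]`,
`H := ∫_{|ω| = ε} ∫_{|λ − ω| = ε} G(λ) dℋ^{n−1}(λ) dℋ^{n−1}(ω)` satisfies
`H ≤ C (ε^{n−2} ∫_{|λ| ≤ 2ε} G(λ) dλ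
      + ε^{n−1} Σ_{j=1}^n Σ_{q ∈ {−1,0,1}} ∫_{λ_j = 2qε, |λ̂_j| ≤ 2ε} G(λ) dℋ^{n−1}(λ))`,
with the sup norm (the norm of the Pi type `Fin n → ℝ`) throughout. -/
theorem statement9 (n : ℕ) (hn : 2 ≤ n) :
    ∃ C : ℝ, 0 < C ∧ ∀ (ε : ℝ), 0 < ε → ∀ G : (Fin n → ℝ) → ℝ≥0∞, Measurable G →
      (∫⁻ ω in {ω : Fin n → ℝ | ‖ω‖ = ε},
          (∫⁻ lam in {lam : Fin n → ℝ | ‖lam - ω‖ = ε}, G lam ∂(μH[(n : ℝ) - 1]))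
            ∂(μH[(n : ℝ) - 1])) ≤
        ENNReal.ofReal C *
          (ENNReal.ofReal (ε ^ (n - 2)) * (∫⁻ lam in {lam : Fin n → ℝ | ‖lam‖ ≤ 2 * ε}, G lam) +
            ENNReal.ofReal (ε ^ (n - 1)) *
              ∑ j : Fin n, ∑ q ∈ ({-1, 0, 1} : Finset ℤ),
                ∫⁻ lam in {lam : Fin n → ℝ |
                    lam j = 2 * (q : ℝ) * ε ∧ ∀ i, i ≠ j → |lam i| ≤ 2 * ε},
                  G lam ∂(μH[(n : ℝ) - 1])) := by
  obtain ⟨m, rfl⟩ : ∃ m, n = m + 2 := ⟨n - 2, by omega⟩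
  refine ⟨((m:ℝ)+2)^2 * 4^(m+2), by positivity, ?_⟩
  intro ε hε G hG
  have hd : ((m+2:ℕ):ℝ) - 1 = ((m+1:ℕ):ℝ) := by push_cast; ring
  have hm2 : m + 2 - 2 = m := by omega
  have hm1 : m + 2 - 1 = m + 1 := by omega
  simp only [hd, hm2, hm1]
  refine le_trans (St9.st9key m ε hε G hG) ?_
  rw [mul_add, ← mul_assoc, ← mul_assoc]
  have hC : (0:ℝ) ≤ ((m:ℝ)+2)^2 * 4^(m+2) := by positivity
  have h2m : (2:ℝ)^m ≤ 4^m := pow_le_pow_left₀ (by norm_num) (by norm_num) m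
  have hmn : (0:ℝ) ≤ (m:ℝ) := Nat.cast_nonneg m
  refine add_le_add (mul_le_mul_left ?_ _) (mul_le_mul_left ?_ _)
  · -- ↑(4*(m+2)^2) * ofReal(2ε)^m ≤ ofReal C * ofReal (ε^m)
    rw [← ENNReal.ofReal_natCast (4*(m+2)^2),
      ← ENNReal.ofReal_pow (by positivity : (0:ℝ) ≤ 2*ε),
      ← ENNReal.ofReal_mul (by positivity),
      ← ENNReal.ofReal_mul hC]
    refine ENNReal.ofReal_le_ofReal ?_
    push_cast
    calc (4*((m:ℝ)+2)^2) * (2*ε)^m = ((m:ℝ)+2)^2 * (4*2^m) * ε^m := by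
          rw [mul_pow]; ring
      _ ≤ ((m:ℝ)+2)^2 * (16*4^m) * ε^m := by
          refine mul_le_mul_of_nonneg_right
            (mul_le_mul_of_nonneg_left ?_ (by positivity)) (by positivity)
          nlinarith [pow_nonneg (show (0:ℝ) ≤ 4 by norm_num) m]
      _ = ((m:ℝ)+2)^2 * 4^(m+2) * ε^m := by rw [pow_add]; ring
  · rw [show (4:ℝ≥0∞) = ENNReal.ofReal 4 by simp,
      ← ENNReal.ofReal_pow (by positivity : (0:ℝ) ≤ 2*ε),
      ← ENNReal.ofReal_mul (by norm_num),
      ← ENNReal.ofReal_mul hC]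
    refine ENNReal.ofReal_le_ofReal ?_
    have h2m1 : (2:ℝ)^(m+1) ≤ 4^(m+1) := pow_le_pow_left₀ (by norm_num) (by norm_num) (m+1)
    calc (4:ℝ)*(2*ε)^(m+1) = (4*2^(m+1)) * ε^(m+1) := by rw [mul_pow]; ring
      _ ≤ (((m:ℝ)+2)^2*4^(m+2)) * ε^(m+1) := by
          refine mul_le_mul_of_nonneg_right ?_ (by positivity)
          have hst : (4:ℝ)*2^(m+1) ≤ 4^(m+2) := by
            have : (4:ℝ)^(m+2) = 4*4^(m+1) := by rw [pow_succ]; ring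
            nlinarith [pow_nonneg (show (0:ℝ) ≤ 4 by norm_num) (m+1)]
          have hone : (1:ℝ) ≤ ((m:ℝ)+2)^2 := by nlinarith
          calc (4:ℝ)*2^(m+1) ≤ 4^(m+2) := hst
            _ ≤ ((m:ℝ)+2)^2*4^(m+2) :=
                le_mul_of_one_le_left (by positivity) hone
      _ = (((m:ℝ)+2)^2*4^(m+2)) * ε^(m+1) := rfl
end
end

section
/- Let n ≥ 1, 0 < s < 1, 1 ≤ p < ∞, and let 1 ≤ l ≤ n be an integer. There is a constant C = C(n, s, p) such that for every ε > 0 and every measurable f : ℝⁿ → ℝ^m, ∫_{ℝⁿ} dU ∫_{{λ' ∈ ℝ^l : |λ'_k| ≤ ε ∀k}} dλ' |f(U + Σ_{k=1}^{l} λ'_k e_k) − f(U)|^p / |λ'|^{l+sp} ≤ C ∫_{ℝⁿ} dU ∫_{{λ ∈ ℝⁿ : |λ| ≤ 2ε}} dλ |f(U + λ) − f(U)|^p / |λ|^{n+sp}, where e_1, …, e_n is the standard basis of ℝⁿ. -/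
open MeasureTheory Filter Topology ENNReal

noncomputable section

abbrev EucSp (m : ℕ) := EuclideanSpace ℝ (Fin m)

open Metric Set

variable {n l : ℕ}

def emb (hln : l ≤ n) (x : Fin l → ℝ) : Fin n → ℝ :=
  ∑ k : Fin l, x k • (Pi.single (Fin.castLE hln k) (1 : ℝ) : Fin n → ℝ)

lemma emb_apply (hln : l ≤ n) (x : Fin l → ℝ) (i : Fin n) :
    emb hln x i = if h : (i : ℕ) < l then x ⟨i, h⟩ else 0 := by
  unfold emb
  rw [Finset.sum_apply]
  by_cases h : (i : ℕ) < l
  · rw [dif_pos h]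
    rw [Finset.sum_eq_single (⟨(i : ℕ), h⟩ : Fin l)]
    · simp [Pi.single_apply, Fin.ext_iff]
    · intro k _ hk
      simp only [Pi.smul_apply, Pi.single_apply, smul_eq_mul]
      rw [if_neg, mul_zero]
      intro he; apply hk; apply Fin.ext; simpa [Fin.ext_iff] using he.symm
    · simp
  · rw [dif_neg h]
    apply Finset.sum_eq_zero
    intro k _
    simp only [Pi.smul_apply, Pi.single_apply, smul_eq_mul]
    rw [if_neg, mul_zero]
    intro he; apply h; rw [he]; simpa using k.isLt

lemma emb_zero (hln : l ≤ n) : emb hln 0 = 0 := by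
  unfold emb; simp

lemma norm_emb (hln : l ≤ n) (x : Fin l → ℝ) : ‖emb hln x‖ = ‖x‖ := by
  apply le_antisymm
  · apply pi_norm_le_iff_of_nonneg (norm_nonneg x) |>.2
    intro i
    rw [emb_apply]
    by_cases h : (i : ℕ) < l
    · rw [dif_pos h]; exact norm_le_pi_norm x _
    · rw [dif_neg h]; simp
  · apply pi_norm_le_iff_of_nonneg (norm_nonneg _) |>.2
    intro k
    have : x k = emb hln x (Fin.castLE hln k) := by
      rw [emb_apply]; simp
    rw [this]
    exact norm_le_pi_norm _ _

lemma continuous_emb (hln : l ≤ n) : Continuous (emb hln) := by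
  unfold emb
  exact continuous_finset_sum _ fun k _ => (continuous_apply k).smul continuous_const

lemma rpow_add_le' {p : ℝ} (hp : 0 ≤ p) (x y : ℝ≥0∞) :
    (x + y) ^ p ≤ 2 ^ p * (x ^ p + y ^ p) := by
  calc (x + y) ^ p ≤ (2 * max x y) ^ p := by
        apply ENNReal.rpow_le_rpow _ hp
        rw [two_mul]
        exact add_le_add (le_max_left x y) (le_max_right x y)
    _ = 2 ^ p * (max x y) ^ p := ENNReal.mul_rpow_of_nonneg _ _ hp
    _ ≤ 2 ^ p * (x ^ p + y ^ p) := by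
        gcongr
        rcases max_cases x y with ⟨h, _⟩ | ⟨h, _⟩ <;> rw [h]
        · exact le_add_of_nonneg_right zero_le
        · exact le_add_of_nonneg_left zero_le

lemma slint_add (G : (Fin n → ℝ) → ℝ≥0∞) (c : Fin n → ℝ) (t : ℝ) :
    ∫⁻ w in closedBall (0 : Fin n → ℝ) t, G (c + w) = ∫⁻ lam in closedBall c t, G lam := by
  have h := (measurePreserving_add_left (volume : Measure (Fin n → ℝ)) c).setLIntegral_comp_preimage_emb
    (MeasurableEquiv.addLeft c).measurableEmbedding G (closedBall c t)
  have hset : (fun x : Fin n → ℝ => c + x) ⁻¹' closedBall c t = closedBall 0 t := by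
    ext w
    simp [mem_closedBall, dist_eq_norm]
  rw [hset] at h
  exact h

lemma slint_sub (G : (Fin n → ℝ) → ℝ≥0∞) (c : Fin n → ℝ) (t : ℝ) :
    ∫⁻ w in closedBall (0 : Fin n → ℝ) t, G (c - w) = ∫⁻ lam in closedBall c t, G lam := by
  have h := (Measure.measurePreserving_sub_left (volume : Measure (Fin n → ℝ)) c).setLIntegral_comp_preimage_emb
    (MeasurableEquiv.subLeft c).measurableEmbedding G (closedBall c t)
  have hset : (fun x : Fin n → ℝ => c - x) ⁻¹' closedBall c t = closedBall 0 t := by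
    ext w
    simp only [mem_preimage, mem_closedBall, dist_eq_norm, dist_zero_right,
      sub_sub_cancel_left, norm_neg, sub_zero]
  rw [hset] at h
  exact h

lemma weight_calc {s p R : ℝ} (l n : ℕ) (hR : 0 < R) :
    ((ENNReal.ofReal R ^ ((l : ℝ) + s * p))⁻¹ * (ENNReal.ofReal ((R / 2) ^ n))⁻¹) *
        ENNReal.ofReal ((2 * (4 * R)) ^ l)
      = ENNReal.ofReal ((8 : ℝ) ^ l * 2 ^ n) *
        (ENNReal.ofReal R ^ ((n : ℝ) + s * p))⁻¹ := by
  set x := ENNReal.ofReal R with hx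
  have hx0 : x ≠ 0 := (ENNReal.ofReal_pos.2 hR).ne'
  have hxt : x ≠ ⊤ := ENNReal.ofReal_ne_top
  have h8 : ENNReal.ofReal ((2 * (4 * R)) ^ l) = ENNReal.ofReal ((8:ℝ) ^ l) * x ^ (l : ℕ) := by
    rw [show (2 * (4 * R)) = 8 * R by ring, mul_pow, ENNReal.ofReal_mul (by positivity),
      ENNReal.ofReal_pow hR.le]
  have h2n : (ENNReal.ofReal ((R / 2) ^ n))⁻¹ = (x ^ (n : ℕ))⁻¹ * 2 ^ n := by
    rw [show (R / 2) = R * 2⁻¹ by ring, mul_pow, ENNReal.ofReal_mul (by positivity),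
      ENNReal.ofReal_pow hR.le, ENNReal.ofReal_pow (by norm_num : (0:ℝ) ≤ 2⁻¹),
      ENNReal.mul_inv (Or.inr (by simp [ENNReal.ofReal_ne_top])) (Or.inl (by
        exact pow_ne_top hxt)),
      ENNReal.ofReal_inv_of_pos (by norm_num : (0:ℝ) < 2)]
    rw [← ENNReal.inv_pow, inv_inv, ENNReal.ofReal_ofNat]
  have hxE : (x ^ ((l : ℝ) + s * p))⁻¹ * (x ^ (n : ℕ))⁻¹ * x ^ (l : ℕ)
      = (x ^ ((n : ℝ) + s * p))⁻¹ := by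
    rw [← ENNReal.rpow_natCast x n, ← ENNReal.rpow_natCast x l,
      ← ENNReal.rpow_neg, ← ENNReal.rpow_neg,
      ← ENNReal.rpow_add _ _ hx0 hxt, ← ENNReal.rpow_add _ _ hx0 hxt,
      ← ENNReal.rpow_neg]
    congr 1
    ring
  calc ((x ^ ((l : ℝ) + s * p))⁻¹ * (ENNReal.ofReal ((R / 2) ^ n))⁻¹) *
        ENNReal.ofReal ((2 * (4 * R)) ^ l)
      = ((x ^ ((l : ℝ) + s * p))⁻¹ * ((x ^ (n : ℕ))⁻¹ * 2 ^ n)) *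
        (ENNReal.ofReal ((8:ℝ) ^ l) * x ^ (l : ℕ)) := by rw [h8, h2n]
    _ = (ENNReal.ofReal ((8:ℝ) ^ l) * 2 ^ n) *
        ((x ^ ((l : ℝ) + s * p))⁻¹ * (x ^ (n : ℕ))⁻¹ * x ^ (l : ℕ)) := by ring
    _ = ENNReal.ofReal ((8 : ℝ) ^ l * 2 ^ n) * (x ^ ((n : ℝ) + s * p))⁻¹ := by
        rw [hxE, ENNReal.ofReal_mul (by positivity), ENNReal.ofReal_pow (by norm_num : (0:ℝ) ≤ 2)]
        norm_num [ENNReal.ofReal_ofNat]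

def Kker (hln : l ≤ n) (s p ε : ℝ) (q : (Fin l → ℝ) × (Fin n → ℝ)) : ℝ≥0∞ :=
  if ‖q.1‖ ≤ ε ∧ ‖q.2 - (2⁻¹ : ℝ) • emb hln q.1‖ ≤ ‖q.1‖ / 4 then
    (ENNReal.ofReal ‖q.1‖ ^ ((l : ℝ) + s * p))⁻¹ * (ENNReal.ofReal ((‖q.1‖ / 2) ^ n))⁻¹
  else 0

lemma Kker_meas (hln : l ≤ n) (s p ε : ℝ) : Measurable (Kker hln s p ε) := by
  unfold Kker
  have hset : MeasurableSet {q : (Fin l → ℝ) × (Fin n → ℝ) |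
      ‖q.1‖ ≤ ε ∧ ‖q.2 - (2⁻¹ : ℝ) • emb hln q.1‖ ≤ ‖q.1‖ / 4} :=
    (measurableSet_le continuous_fst.norm.measurable measurable_const).inter
      (measurableSet_le (continuous_snd.sub
          (((continuous_emb hln).comp continuous_fst).const_smul (2⁻¹ : ℝ))).norm.measurable
        (continuous_fst.norm.measurable.div_const _))
  exact Measurable.ite hset
    (Measurable.mul
      ((ENNReal.continuous_rpow_const.comp
        (ENNReal.continuous_ofReal.comp continuous_fst.norm)).measurable).inv
      ((ENNReal.continuous_ofReal.comp
        ((continuous_fst.norm.div_const _).pow _)).measurable).inv)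
    measurable_const

lemma step4 (hln : l ≤ n) {s p ε : ℝ} (hs0 : 0 < s) (hp0 : 0 < p) (hε : 0 < ε)
    (lam : Fin n → ℝ) :
    ∫⁻ x, Kker hln s p ε (x, lam) ≤ ENNReal.ofReal ((8:ℝ) ^ l * 2 ^ n) *
      (closedBall (0 : Fin n → ℝ) (2 * ε)).indicator
        (fun lam => (ENNReal.ofReal ‖lam‖ ^ ((n : ℝ) + s * p))⁻¹) lam := by
  have hsp : 0 < s * p := mul_pos hs0 hp0
  by_cases hlam2 : ‖lam‖ ≤ 2 * ε
  · rw [indicator_of_mem (by simpa [mem_closedBall, dist_zero_right] using hlam2)]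
    by_cases hl0 : lam = 0
    · subst hl0
      have : (ENNReal.ofReal ‖(0 : Fin n → ℝ)‖ ^ ((n : ℝ) + s * p))⁻¹ = ⊤ := by
        rw [norm_zero, ENNReal.ofReal_zero, ENNReal.zero_rpow_of_pos (by positivity)]
        simp
      rw [this, ENNReal.mul_top (by positivity)]
      exact le_top
    · have hR : 0 < ‖lam‖ := norm_pos_iff.2 hl0
      have hpt : ∀ x : Fin l → ℝ, Kker hln s p ε (x, lam) ≤
          (closedBall (0 : Fin l → ℝ) (4 * ‖lam‖)).indicator
            (fun _ => (ENNReal.ofReal ‖lam‖ ^ ((l : ℝ) + s * p))⁻¹ *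
              (ENNReal.ofReal ((‖lam‖ / 2) ^ n))⁻¹) x := by
        intro x
        unfold Kker
        by_cases hcond : ‖x‖ ≤ ε ∧ ‖lam - (2⁻¹ : ℝ) • emb hln x‖ ≤ ‖x‖ / 4
        · rw [if_pos hcond]
          obtain ⟨h1, h2⟩ := hcond
          have hcnorm : ‖(2⁻¹ : ℝ) • emb hln x‖ = ‖x‖ / 2 := by
            rw [norm_smul, norm_emb hln, Real.norm_eq_abs]
            rw [abs_of_pos (by norm_num : (0:ℝ) < 2⁻¹)]; ring
          have hsplit : ‖lam‖ ≤ ‖x‖ / 2 + ‖x‖ / 4 := by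
            calc ‖lam‖ = ‖(2⁻¹ : ℝ) • emb hln x + (lam - (2⁻¹ : ℝ) • emb hln x)‖ := by
                  congr 1; abel
              _ ≤ ‖(2⁻¹ : ℝ) • emb hln x‖ + ‖lam - (2⁻¹ : ℝ) • emb hln x‖ := norm_add_le _ _
              _ ≤ ‖x‖ / 2 + ‖x‖ / 4 := by rw [hcnorm]; exact add_le_add le_rfl h2
          have hup : ‖lam‖ ≤ ‖x‖ := by linarith
          have hlow : ‖x‖ ≤ 4 * ‖lam‖ := by
            have : ‖x‖ / 2 ≤ ‖lam‖ + ‖x‖ / 4 := by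
              calc ‖x‖ / 2 = ‖(2⁻¹ : ℝ) • emb hln x‖ := hcnorm.symm
                _ = ‖lam - (lam - (2⁻¹ : ℝ) • emb hln x)‖ := by congr 1; abel
                _ ≤ ‖lam‖ + ‖lam - (2⁻¹ : ℝ) • emb hln x‖ := norm_sub_le _ _
                _ ≤ ‖lam‖ + ‖x‖ / 4 := by exact add_le_add le_rfl h2
            linarith
          rw [indicator_of_mem (by simpa [mem_closedBall, dist_zero_right] using hlow)]
          have e1 : (ENNReal.ofReal ‖x‖ ^ ((l : ℝ) + s * p))⁻¹ ≤
              (ENNReal.ofReal ‖lam‖ ^ ((l : ℝ) + s * p))⁻¹ := by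
            apply ENNReal.inv_le_inv.2
            exact ENNReal.rpow_le_rpow (ENNReal.ofReal_le_ofReal hup) (by positivity)
          have e2 : (ENNReal.ofReal ((‖x‖ / 2) ^ n))⁻¹ ≤
              (ENNReal.ofReal ((‖lam‖ / 2) ^ n))⁻¹ := by
            apply ENNReal.inv_le_inv.2
            exact ENNReal.ofReal_le_ofReal
              (pow_le_pow_left₀ (by positivity) (by linarith) n)
          exact mul_le_mul' e1 e2
        · rw [if_neg hcond]; exact zero_le
      calc ∫⁻ x, Kker hln s p ε (x, lam) ≤
          ∫⁻ x, (closedBall (0 : Fin l → ℝ) (4 * ‖lam‖)).indicator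
            (fun _ => (ENNReal.ofReal ‖lam‖ ^ ((l : ℝ) + s * p))⁻¹ *
              (ENNReal.ofReal ((‖lam‖ / 2) ^ n))⁻¹) x := lintegral_mono hpt
        _ = ((ENNReal.ofReal ‖lam‖ ^ ((l : ℝ) + s * p))⁻¹ *
              (ENNReal.ofReal ((‖lam‖ / 2) ^ n))⁻¹) *
            volume (closedBall (0 : Fin l → ℝ) (4 * ‖lam‖)) :=
          lintegral_indicator_const measurableSet_closedBall _
        _ = ((ENNReal.ofReal ‖lam‖ ^ ((l : ℝ) + s * p))⁻¹ *
              (ENNReal.ofReal ((‖lam‖ / 2) ^ n))⁻¹) *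
            ENNReal.ofReal ((2 * (4 * ‖lam‖)) ^ l) := by
          rw [Real.volume_pi_closedBall _ (by positivity), Fintype.card_fin]
        _ = ENNReal.ofReal ((8 : ℝ) ^ l * 2 ^ n) *
            (ENNReal.ofReal ‖lam‖ ^ ((n : ℝ) + s * p))⁻¹ := weight_calc l n hR
  · have hz : ∀ x : Fin l → ℝ, Kker hln s p ε (x, lam) = 0 := by
      intro x
      unfold Kker
      rw [if_neg]
      rintro ⟨h1, h2⟩
      have hcnorm : ‖(2⁻¹ : ℝ) • emb hln x‖ = ‖x‖ / 2 := by
        rw [norm_smul, norm_emb hln, Real.norm_eq_abs]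
        rw [abs_of_pos (by norm_num : (0:ℝ) < 2⁻¹)]; ring
      have : ‖lam‖ ≤ ‖x‖ / 2 + ‖x‖ / 4 := by
        calc ‖lam‖ = ‖(2⁻¹ : ℝ) • emb hln x + (lam - (2⁻¹ : ℝ) • emb hln x)‖ := by
              congr 1; abel
          _ ≤ ‖(2⁻¹ : ℝ) • emb hln x‖ + ‖lam - (2⁻¹ : ℝ) • emb hln x‖ := norm_add_le _ _
          _ ≤ ‖x‖ / 2 + ‖x‖ / 4 := by rw [hcnorm]; exact add_le_add le_rfl h2
      push_neg at hlam2
      linarith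
    simp only [hz, lintegral_zero]
    exact zero_le

lemma step2 (hln : l ≤ n) {s p ε : ℝ} (hp0 : 0 ≤ p)
    (G : (Fin n → ℝ) → ℝ≥0∞) (hGm : Measurable G) (hG0 : G 0 = 0)
    (hG : ∀ a b, G (a + b) ≤ 2 ^ p * (G a + G b))
    {x : Fin l → ℝ} (hxε : ‖x‖ ≤ ε) :
    G (emb hln x) * (ENNReal.ofReal ‖x‖ ^ ((l : ℝ) + s * p))⁻¹ ≤
      (2 * 2 ^ p) * ∫⁻ lam, Kker hln s p ε (x, lam) * G lam := by
  by_cases hx0 : x = 0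
  · subst hx0
    rw [emb_zero, hG0, zero_mul]
    exact zero_le
  have hr : 0 < ‖x‖ := norm_pos_iff.2 hx0
  set c : Fin n → ℝ := (2⁻¹ : ℝ) • emb hln x with hc
  have hcc : c + c = emb hln x := by
    rw [hc, ← add_smul]; norm_num
  set W : ℝ≥0∞ := (ENNReal.ofReal ‖x‖ ^ ((l : ℝ) + s * p))⁻¹ *
    (ENNReal.ofReal ((‖x‖ / 2) ^ n))⁻¹ with hW
  have hKx : ∀ lam, Kker hln s p ε (x, lam) =
      (closedBall c (‖x‖ / 4)).indicator (fun _ => W) lam := by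
    intro lam
    unfold Kker
    by_cases hmem : lam ∈ closedBall c (‖x‖ / 4)
    · rw [indicator_of_mem hmem, if_pos]
      exact ⟨hxε, by simpa [mem_closedBall, dist_eq_norm] using hmem⟩
    · rw [indicator_of_notMem hmem, if_neg]
      rintro ⟨-, h2⟩
      exact hmem (by simpa [mem_closedBall, dist_eq_norm] using h2)
  have hvol : volume (closedBall (0 : Fin n → ℝ) (‖x‖ / 4)) =
      ENNReal.ofReal ((‖x‖ / 2) ^ n) := by
    rw [Real.volume_pi_closedBall _ (by positivity), Fintype.card_fin,
      show 2 * (‖x‖ / 4) = ‖x‖ / 2 by ring]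
  have key : G (emb hln x) * ENNReal.ofReal ((‖x‖ / 2) ^ n) ≤
      (2 * 2 ^ p) * ∫⁻ lam in closedBall c (‖x‖ / 4), G lam := by
    calc G (emb hln x) * ENNReal.ofReal ((‖x‖ / 2) ^ n)
        = ∫⁻ _ in closedBall (0 : Fin n → ℝ) (‖x‖ / 4), G (emb hln x) := by
          rw [setLIntegral_const, hvol]
      _ ≤ ∫⁻ w in closedBall (0 : Fin n → ℝ) (‖x‖ / 4),
            2 ^ p * (G (c - w) + G (c + w)) := by
          apply lintegral_mono
          intro w
          have hrw : emb hln x = (c - w) + (c + w) := by rw [← hcc]; abel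
          rw [hrw]
          exact hG _ _
      _ = 2 ^ p * ((∫⁻ w in closedBall (0 : Fin n → ℝ) (‖x‖ / 4), G (c - w)) +
            ∫⁻ w in closedBall (0 : Fin n → ℝ) (‖x‖ / 4), G (c + w)) := by
          have hm1 : Measurable fun w : Fin n → ℝ => G (c - w) :=
            hGm.comp (measurable_const.sub measurable_id)
          have hm2 : Measurable fun w : Fin n → ℝ => G (c + w) :=
            hGm.comp (measurable_const.add measurable_id)
          rw [lintegral_const_mul _ (f := fun w => G (c - w) + G (c + w)) (hm1.add hm2), lintegral_add_left hm1]
      _ = 2 ^ p * ((∫⁻ lam in closedBall c (‖x‖ / 4), G lam) +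
            ∫⁻ lam in closedBall c (‖x‖ / 4), G lam) := by
          rw [slint_add, slint_sub]
      _ = (2 * 2 ^ p) * ∫⁻ lam in closedBall c (‖x‖ / 4), G lam := by ring
  have hv0 : ENNReal.ofReal ((‖x‖ / 2) ^ n) ≠ 0 :=
    (ENNReal.ofReal_pos.2 (by positivity)).ne'
  have hvt : ENNReal.ofReal ((‖x‖ / 2) ^ n) ≠ ⊤ := ENNReal.ofReal_ne_top
  have h2 : G (emb hln x) ≤
      ((2 * 2 ^ p) * ∫⁻ lam in closedBall c (‖x‖ / 4), G lam) *
        (ENNReal.ofReal ((‖x‖ / 2) ^ n))⁻¹ := by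
    rw [← div_eq_mul_inv]
    exact (ENNReal.le_div_iff_mul_le (Or.inl hv0) (Or.inl hvt)).2 key
  have hRHS : ∫⁻ lam, Kker hln s p ε (x, lam) * G lam =
      W * ∫⁻ lam in closedBall c (‖x‖ / 4), G lam := by
    have hpt : ∀ lam, Kker hln s p ε (x, lam) * G lam =
        (closedBall c (‖x‖ / 4)).indicator (fun lam => W * G lam) lam := by
      intro lam
      rw [hKx]
      by_cases hmem : lam ∈ closedBall c (‖x‖ / 4)
      · simp [hmem]
      · simp [hmem]
    simp_rw [hpt]
    rw [lintegral_indicator measurableSet_closedBall, lintegral_const_mul _ hGm]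
  rw [hRHS]
  calc G (emb hln x) * (ENNReal.ofReal ‖x‖ ^ ((l : ℝ) + s * p))⁻¹
      ≤ (((2 * 2 ^ p) * ∫⁻ lam in closedBall c (‖x‖ / 4), G lam) *
          (ENNReal.ofReal ((‖x‖ / 2) ^ n))⁻¹) *
        (ENNReal.ofReal ‖x‖ ^ ((l : ℝ) + s * p))⁻¹ := mul_le_mul_left h2 _
    _ = (2 * 2 ^ p) * (W * ∫⁻ lam in closedBall c (‖x‖ / 4), G lam) := by
        rw [hW]; ring

lemma core (hln : l ≤ n) {s p ε : ℝ} (hs0 : 0 < s) (hp0 : 0 < p) (hε : 0 < ε)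
    (G : (Fin n → ℝ) → ℝ≥0∞) (hGm : Measurable G) (hG0 : G 0 = 0)
    (hG : ∀ a b, G (a + b) ≤ 2 ^ p * (G a + G b)) :
    ∫⁻ x in closedBall (0 : Fin l → ℝ) ε,
        G (emb hln x) * (ENNReal.ofReal ‖x‖ ^ ((l : ℝ) + s * p))⁻¹
      ≤ ((2 * 2 ^ p) * ENNReal.ofReal ((8 : ℝ) ^ l * 2 ^ n)) *
        ∫⁻ lam in closedBall (0 : Fin n → ℝ) (2 * ε),
          G lam * (ENNReal.ofReal ‖lam‖ ^ ((n : ℝ) + s * p))⁻¹ := by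
  have hbig : Measurable fun q : (Fin l → ℝ) × (Fin n → ℝ) =>
      Kker hln s p ε q * G q.2 := (Kker_meas hln s p ε).mul (hGm.comp measurable_snd)
  have hinner : Measurable fun x : Fin l → ℝ =>
      ∫⁻ lam, Kker hln s p ε (x, lam) * G lam := hbig.lintegral_prod_right'
  calc ∫⁻ x in closedBall (0 : Fin l → ℝ) ε,
        G (emb hln x) * (ENNReal.ofReal ‖x‖ ^ ((l : ℝ) + s * p))⁻¹
      ≤ ∫⁻ x in closedBall (0 : Fin l → ℝ) ε,
          (2 * 2 ^ p) * ∫⁻ lam, Kker hln s p ε (x, lam) * G lam := by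
        apply setLIntegral_mono (measurable_const.mul hinner)
        intro x hx
        exact step2 hln hp0.le G hGm hG0 hG
          (by simpa [mem_closedBall, dist_zero_right] using hx)
    _ ≤ ∫⁻ x, (2 * 2 ^ p) * ∫⁻ lam, Kker hln s p ε (x, lam) * G lam :=
        setLIntegral_le_lintegral _ _
    _ = (2 * 2 ^ p) * ∫⁻ x, ∫⁻ lam, Kker hln s p ε (x, lam) * G lam :=
        lintegral_const_mul _ hinner
    _ = (2 * 2 ^ p) * ∫⁻ lam, ∫⁻ x, Kker hln s p ε (x, lam) * G lam := by
        rw [lintegral_lintegral_swap hbig.aemeasurable]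
    _ = (2 * 2 ^ p) * ∫⁻ lam, (∫⁻ x, Kker hln s p ε (x, lam)) * G lam := by
        congr 1
        apply lintegral_congr
        intro lam
        exact lintegral_mul_const _ ((Kker_meas hln s p ε).comp
          (measurable_id.prodMk measurable_const))
    _ ≤ (2 * 2 ^ p) * ∫⁻ lam, (ENNReal.ofReal ((8 : ℝ) ^ l * 2 ^ n) *
          (closedBall (0 : Fin n → ℝ) (2 * ε)).indicator
            (fun lam => (ENNReal.ofReal ‖lam‖ ^ ((n : ℝ) + s * p))⁻¹) lam) * G lam := by
        apply mul_le_mul_right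
        apply lintegral_mono
        intro lam
        exact mul_le_mul_left (step4 hln hs0 hp0 hε lam) _
    _ = ((2 * 2 ^ p) * ENNReal.ofReal ((8 : ℝ) ^ l * 2 ^ n)) *
        ∫⁻ lam in closedBall (0 : Fin n → ℝ) (2 * ε),
          G lam * (ENNReal.ofReal ‖lam‖ ^ ((n : ℝ) + s * p))⁻¹ := by
        have hpt : ∀ lam : Fin n → ℝ,
            (ENNReal.ofReal ((8 : ℝ) ^ l * 2 ^ n) *
              (closedBall (0 : Fin n → ℝ) (2 * ε)).indicator
                (fun lam => (ENNReal.ofReal ‖lam‖ ^ ((n : ℝ) + s * p))⁻¹) lam) * G lam =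
            ENNReal.ofReal ((8 : ℝ) ^ l * 2 ^ n) *
              (closedBall (0 : Fin n → ℝ) (2 * ε)).indicator
                (fun lam => G lam * (ENNReal.ofReal ‖lam‖ ^ ((n : ℝ) + s * p))⁻¹) lam := by
          intro lam
          by_cases hmem : lam ∈ closedBall (0 : Fin n → ℝ) (2 * ε)
          · simp only [indicator_of_mem hmem]; ring
          · simp [indicator_of_notMem hmem]
        simp_rw [hpt]
        have hmi : Measurable ((closedBall (0 : Fin n → ℝ) (2 * ε)).indicator
            (fun lam => G lam * (ENNReal.ofReal ‖lam‖ ^ ((n : ℝ) + s * p))⁻¹)) :=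
          Measurable.indicator
            (hGm.mul (ENNReal.continuous_rpow_const.comp
              (ENNReal.continuous_ofReal.comp continuous_norm)).measurable.inv)
            measurableSet_closedBall
        rw [lintegral_const_mul _ hmi, lintegral_indicator measurableSet_closedBall,
          ← mul_assoc]


/-- Let `n ≥ 1`, `0 < s < 1`, `1 ≤ p < ∞` and `1 ≤ l ≤ n`.  There is a
constant `C = C(n, s, p)` such that for every `ε > 0` and every measurable `f : ℝⁿ → ℝ^m`,
`∫_{ℝⁿ} dU ∫_{|λ'_k| ≤ ε ∀k} dλ' |f(U + Σ_k λ'_k e_k) − f(U)|^p / |λ'|^{l+sp}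
  ≤ C ∫_{ℝⁿ} dU ∫_{|λ| ≤ 2ε} dλ |f(U + λ) − f(U)|^p / |λ|^{n+sp}`,
with the sup norm (the norm of the Pi type) on `ℝ^l` and `ℝⁿ`. -/
theorem statement10 (n m : ℕ) (hn : 1 ≤ n) (s p : ℝ)
    (hs0 : 0 < s) (hs1 : s < 1) (hp : 1 ≤ p)
    (l : ℕ) (hl1 : 1 ≤ l) (hln : l ≤ n) :
    ∃ C : ℝ, 0 < C ∧ ∀ (ε : ℝ), 0 < ε →
      ∀ f : (Fin n → ℝ) → EucSp m, Measurable f →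
      (∫⁻ U : Fin n → ℝ, ∫⁻ lam in {lam : Fin l → ℝ | ∀ k, |lam k| ≤ ε},
          (‖f (U + ∑ k : Fin l, lam k • (Pi.single (Fin.castLE hln k) (1 : ℝ) : Fin n → ℝ)) - f U‖₊ : ℝ≥0∞) ^ p /
            (ENNReal.ofReal ‖lam‖) ^ ((l : ℝ) + s * p)) ≤
        ENNReal.ofReal C *
          ∫⁻ U : Fin n → ℝ, ∫⁻ lam in {lam : Fin n → ℝ | ‖lam‖ ≤ 2 * ε},
            (‖f (U + lam) - f U‖₊ : ℝ≥0∞) ^ p /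
              (ENNReal.ofReal ‖lam‖) ^ ((n : ℝ) + s * p) := by
  have hp0 : (0:ℝ) < p := lt_of_lt_of_le one_pos hp
  refine ⟨2 * 2 ^ p * ((8:ℝ) ^ n * 2 ^ n), by positivity, ?_⟩
  intro ε hε f hf
  -- the key measurable functions
  have hsec : ∀ v : Fin n → ℝ, Measurable fun U : Fin n → ℝ =>
      (‖f (U + v) - f U‖₊ : ℝ≥0∞) ^ p := by
    intro v
    exact (((hf.comp (measurable_add_const v)).sub hf).nnnorm.coe_nnreal_ennreal).pow_const p
  set G : (Fin n → ℝ) → ℝ≥0∞ := fun lam => ∫⁻ U, (‖f (U + lam) - f U‖₊ : ℝ≥0∞) ^ p with hGdef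
  have hgp : Measurable fun q : (Fin n → ℝ) × (Fin n → ℝ) =>
      (‖f (q.2 + q.1) - f q.2‖₊ : ℝ≥0∞) ^ p :=
    (((hf.comp (measurable_snd.add measurable_fst)).sub
      (hf.comp measurable_snd)).nnnorm.coe_nnreal_ennreal).pow_const p
  have hGm : Measurable G := hgp.lintegral_prod_right'
  have hG0 : G 0 = 0 := by
    have h0 : ∀ U : Fin n → ℝ, (‖f (U + 0) - f U‖₊ : ℝ≥0∞) ^ p = 0 := by
      intro U
      rw [add_zero, sub_self]
      simp [ENNReal.zero_rpow_of_pos hp0]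
    simp only [hGdef, h0, lintegral_zero]
  have hG : ∀ a b, G (a + b) ≤ 2 ^ p * (G a + G b) := by
    intro a b
    have hpt : ∀ U : Fin n → ℝ, (‖f (U + (a + b)) - f U‖₊ : ℝ≥0∞) ^ p ≤
        2 ^ p * ((‖f (U + b + a) - f (U + b)‖₊ : ℝ≥0∞) ^ p +
          (‖f (U + b) - f U‖₊ : ℝ≥0∞) ^ p) := by
      intro U
      have hsplit : f (U + (a + b)) - f U =
          (f (U + b + a) - f (U + b)) + (f (U + b) - f U) := by
        rw [show U + (a + b) = U + b + a by abel]
        abel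
      calc (‖f (U + (a + b)) - f U‖₊ : ℝ≥0∞) ^ p
          ≤ ((‖f (U + b + a) - f (U + b)‖₊ : ℝ≥0∞) +
              (‖f (U + b) - f U‖₊ : ℝ≥0∞)) ^ p := by
            apply ENNReal.rpow_le_rpow _ hp0.le
            rw [hsplit, ← ENNReal.coe_add]
            exact ENNReal.coe_le_coe.2 (nnnorm_add_le _ _)
        _ ≤ 2 ^ p * ((‖f (U + b + a) - f (U + b)‖₊ : ℝ≥0∞) ^ p +
              (‖f (U + b) - f U‖₊ : ℝ≥0∞) ^ p) := rpow_add_le' hp0.le _ _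
    have hm1 : Measurable fun U : Fin n → ℝ =>
        (‖f (U + b + a) - f (U + b)‖₊ : ℝ≥0∞) ^ p :=
      (((hf.comp ((measurable_add_const b).add_const a)).sub
        (hf.comp (measurable_add_const b))).nnnorm.coe_nnreal_ennreal).pow_const p
    calc G (a + b) ≤ ∫⁻ U, 2 ^ p * ((‖f (U + b + a) - f (U + b)‖₊ : ℝ≥0∞) ^ p +
          (‖f (U + b) - f U‖₊ : ℝ≥0∞) ^ p) := lintegral_mono hpt
      _ = 2 ^ p * ((∫⁻ U, (‖f (U + b + a) - f (U + b)‖₊ : ℝ≥0∞) ^ p) + G b) := by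
          rw [lintegral_const_mul _ (f := fun U => (‖f (U + b + a) - f (U + b)‖₊ : ℝ≥0∞) ^ p +
            (‖f (U + b) - f U‖₊ : ℝ≥0∞) ^ p) (hm1.add (hsec b)), lintegral_add_left hm1]
      _ = 2 ^ p * (G a + G b) := by
          congr 2
          exact lintegral_add_right_eq_self
            (fun U => (‖f (U + a) - f U‖₊ : ℝ≥0∞) ^ p) b
  -- rewrite the sets
  have hS1 : {lam : Fin l → ℝ | ∀ k, |lam k| ≤ ε} = closedBall (0 : Fin l → ℝ) ε := by
    ext x
    simp only [mem_setOf_eq, mem_closedBall, dist_zero_right,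
      pi_norm_le_iff_of_nonneg hε.le, Real.norm_eq_abs]
  have hS2 : {lam : Fin n → ℝ | ‖lam‖ ≤ 2 * ε} = closedBall (0 : Fin n → ℝ) (2 * ε) := by
    ext x
    simp only [mem_setOf_eq, mem_closedBall, dist_zero_right]
  have hsum : ∀ lam : Fin l → ℝ,
      (∑ k : Fin l, lam k • (Pi.single (Fin.castLE hln k) (1 : ℝ) : Fin n → ℝ)) =
        emb hln lam := fun _ => rfl
  simp only [hsum, div_eq_mul_inv, hS1, hS2]
  -- swap the integrals
  have hswap1 : (∫⁻ U : Fin n → ℝ, ∫⁻ x in closedBall (0 : Fin l → ℝ) ε,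
      (‖f (U + emb hln x) - f U‖₊ : ℝ≥0∞) ^ p *
        ((ENNReal.ofReal ‖x‖) ^ ((l : ℝ) + s * p))⁻¹) =
      ∫⁻ x in closedBall (0 : Fin l → ℝ) ε,
        G (emb hln x) * ((ENNReal.ofReal ‖x‖) ^ ((l : ℝ) + s * p))⁻¹ := by
    have hm : Measurable fun q : (Fin n → ℝ) × (Fin l → ℝ) =>
        (‖f (q.1 + emb hln q.2) - f q.1‖₊ : ℝ≥0∞) ^ p *
          ((ENNReal.ofReal ‖q.2‖) ^ ((l : ℝ) + s * p))⁻¹ := by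
      apply Measurable.mul
      · exact (((hf.comp (measurable_fst.add
          ((continuous_emb hln).measurable.comp measurable_snd))).sub
          (hf.comp measurable_fst)).nnnorm.coe_nnreal_ennreal).pow_const p
      · exact ((ENNReal.continuous_rpow_const.comp
          (ENNReal.continuous_ofReal.comp (continuous_norm.comp
            continuous_snd))).measurable).inv
    rw [lintegral_lintegral_swap hm.aemeasurable]
    apply lintegral_congr
    intro x
    exact lintegral_mul_const _ (hsec (emb hln x))
  have hswap2 : (∫⁻ U : Fin n → ℝ, ∫⁻ lam in closedBall (0 : Fin n → ℝ) (2 * ε),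
      (‖f (U + lam) - f U‖₊ : ℝ≥0∞) ^ p *
        ((ENNReal.ofReal ‖lam‖) ^ ((n : ℝ) + s * p))⁻¹) =
      ∫⁻ lam in closedBall (0 : Fin n → ℝ) (2 * ε),
        G lam * ((ENNReal.ofReal ‖lam‖) ^ ((n : ℝ) + s * p))⁻¹ := by
    have hm : Measurable fun q : (Fin n → ℝ) × (Fin n → ℝ) =>
        (‖f (q.1 + q.2) - f q.1‖₊ : ℝ≥0∞) ^ p *
          ((ENNReal.ofReal ‖q.2‖) ^ ((n : ℝ) + s * p))⁻¹ := by
      apply Measurable.mul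
      · exact (((hf.comp (measurable_fst.add measurable_snd)).sub
          (hf.comp measurable_fst)).nnnorm.coe_nnreal_ennreal).pow_const p
      · exact ((ENNReal.continuous_rpow_const.comp
          (ENNReal.continuous_ofReal.comp (continuous_norm.comp
            continuous_snd))).measurable).inv
    rw [lintegral_lintegral_swap hm.aemeasurable]
    apply lintegral_congr
    intro x
    exact lintegral_mul_const _ (hsec x)
  rw [hswap1, hswap2]
  have hcore := core hln hs0 hp0 hε G hGm hG0 hG
  apply le_trans hcore
  apply mul_le_mul_left
  -- constant comparison
  have e2 : ENNReal.ofReal (2:ℝ) = 2 := by norm_num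
  have e2p : ENNReal.ofReal ((2:ℝ) ^ p) = 2 ^ p := by
    rw [← ENNReal.ofReal_rpow_of_pos (by norm_num : (0:ℝ) < 2), e2]
  have hsplit : ENNReal.ofReal (2 * 2 ^ p * ((8:ℝ) ^ n * 2 ^ n)) =
      (2 * 2 ^ p) * ENNReal.ofReal ((8:ℝ) ^ n * 2 ^ n) := by
    rw [ENNReal.ofReal_mul (by positivity : (0:ℝ) ≤ 2 * 2 ^ p),
      ENNReal.ofReal_mul (by norm_num : (0:ℝ) ≤ 2), e2, e2p]
  rw [hsplit]
  apply mul_le_mul_right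
  apply ENNReal.ofReal_le_ofReal
  apply mul_le_mul_of_nonneg_right _ (by positivity)
  exact pow_le_pow_right₀ (by norm_num) hln
end
end

section
/- Let n ≥ 1, 0 < s < 1 and 1 ≤ p < ∞ with sp < n, and let L ∈ ℤⁿ with |L| = 1 (sup norm). There is a constant C = C(n, s, p) such that for every ε > 0 and all ω, σ ∈ ℝⁿ with |ω| = |σ| = 1 (sup norm), the kernel k(ω, σ) := ∫₀^ε ∫₀^ε δ^{n−1} λ^{n−1} / |δω − λσ − 2εL|^{n+sp} dδ dλ satisfies k(ω, σ) ≤ C ε^{n−sp} / |ω − σ − 2L|^{n+sp−1}. -/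
open MeasureTheory Filter Topology ENNReal

noncomputable section

lemma aux_integral (ε : ℝ) (hε : 0 < ε) :
    ∫⁻ x in Set.Ioo (0:ℝ) ε, ENNReal.ofReal ((ε - x) ^ (-(1/2) : ℝ)) ≤
      ENNReal.ofReal (2 * ε ^ ((1/2):ℝ)) := by
  have hint : IntervalIntegrable (fun x : ℝ => (ε - x) ^ (-(1/2):ℝ)) volume 0 ε := by
    have h := (intervalIntegral.intervalIntegrable_rpow' (a := 0) (b := ε)
      (r := -(1/2)) (by norm_num)).comp_sub_left ε
    simpa using h.symm
  have hIoo : IntegrableOn (fun x : ℝ => (ε - x) ^ (-(1/2):ℝ)) (Set.Ioo 0 ε) volume := by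
    rw [intervalIntegrable_iff_integrableOn_Ioo_of_le hε.le] at hint
    exact hint
  have hnn : 0 ≤ᵐ[volume.restrict (Set.Ioo (0:ℝ) ε)]
      (fun x : ℝ => (ε - x) ^ (-(1/2):ℝ)) := by
    filter_upwards [ae_restrict_mem measurableSet_Ioo] with x hx
    exact Real.rpow_nonneg (by linarith [hx.2]) _
  have heq := ofReal_integral_eq_lintegral_ofReal hIoo hnn
  rw [← heq]
  apply ENNReal.ofReal_le_ofReal
  have h1 : ∫ x in Set.Ioo (0:ℝ) ε, (ε - x) ^ (-(1/2):ℝ) =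
      ∫ x in (0:ℝ)..ε, (ε - x) ^ (-(1/2):ℝ) := by
    rw [intervalIntegral.integral_of_le hε.le, integral_Ioc_eq_integral_Ioo]
  rw [h1]
  have h2 : (∫ x in (0:ℝ)..ε, (ε - x) ^ (-(1/2):ℝ)) =
      ∫ x in (0:ℝ)..ε, x ^ (-(1/2):ℝ) := by
    rw [intervalIntegral.integral_comp_sub_left (fun x : ℝ => x ^ (-(1/2):ℝ)) ε]
    norm_num
  rw [h2, integral_rpow (Or.inl (by norm_num))]
  rw [Real.zero_rpow (by norm_num)]
  rw [show (-(1/2):ℝ) + 1 = 1/2 by norm_num]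
  rw [div_le_iff₀ (by norm_num)]
  ring_nf
  nlinarith [Real.rpow_nonneg hε.le ((1:ℝ)/2)]

set_option maxHeartbeats 1000000 in
/-- Let `n ≥ 1`, `0 < s < 1`, `1 ≤ p < ∞` with `sp < n`, and `L ∈ ℤⁿ` with
`|L| = 1` (sup norm).  There is a constant `C = C(n, s, p)` such that for every `ε > 0` and
all `ω, σ ∈ ℝⁿ` with `|ω| = |σ| = 1` (sup norm, the norm of the Pi type `Fin n → ℝ`), the
kernel `k(ω, σ) = ∫₀^ε ∫₀^ε δ^{n−1} λ^{n−1} / |δω − λσ − 2εL|^{n+sp} dδ dλ` satisfies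
`k(ω, σ) ≤ C ε^{n−sp} / |ω − σ − 2L|^{n+sp−1}`. -/
theorem statement11 (n : ℕ) (hn : 1 ≤ n) (s p : ℝ)
    (hs0 : 0 < s) (hs1 : s < 1) (hp : 1 ≤ p) (hsp : s * p < n) :
    ∃ C : ℝ, 0 < C ∧ ∀ (L : Fin n → ℤ), ‖(fun i => (L i : ℝ))‖ = 1 →
      ∀ (ε : ℝ), 0 < ε → ∀ (ω σ : Fin n → ℝ), ‖ω‖ = 1 → ‖σ‖ = 1 →
      (∫⁻ δ in Set.Ioo (0 : ℝ) ε, ∫⁻ lam in Set.Ioo (0 : ℝ) ε,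
          ENNReal.ofReal (δ ^ (n - 1) * lam ^ (n - 1)) /
            (ENNReal.ofReal ‖δ • ω - lam • σ - (2 * ε) • (fun i => (L i : ℝ))‖) ^
              ((n : ℝ) + s * p)) ≤
        ENNReal.ofReal (C * ε ^ ((n : ℝ) - s * p)) /
          (ENNReal.ofReal ‖ω - σ - (2 : ℝ) • (fun i => (L i : ℝ))‖) ^
            ((n : ℝ) + s * p - 1) := by
  have hp0 : 0 < p := lt_of_lt_of_le one_pos hp
  have hsp0 : 0 < s * p := mul_pos hs0 hp0
  obtain ⟨m, rfl⟩ : ∃ m, n = m + 1 := ⟨n - 1, (Nat.succ_pred_eq_of_pos hn).symm⟩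
  set q : ℝ := ((m + 1 : ℕ) : ℝ) + s * p with hq
  have hq1 : 1 < q := by
    have : (1:ℝ) ≤ ((m + 1 : ℕ) : ℝ) := by exact_mod_cast Nat.one_le_iff_ne_zero.mpr (by omega)
    rw [hq]; nlinarith
  refine ⟨4 * 2 ^ (q - 1), by positivity, ?_⟩
  intro L hL ε hε ω σ hω hσ
  set Lr : Fin (m + 1) → ℝ := fun i => (L i : ℝ) with hLr
  set A : ℝ := ‖ω - σ - (2 : ℝ) • Lr‖ with hAdef
  simp only [Nat.add_sub_cancel]
  by_cases hA0 : A = 0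
  · rw [hA0, ENNReal.ofReal_zero, ENNReal.zero_rpow_of_pos (by linarith)]
    rw [ENNReal.div_zero]
    · exact le_top
    · exact (ENNReal.ofReal_pos.mpr (by positivity)).ne'
  have hApos : 0 < A := lt_of_le_of_ne (norm_nonneg _) (Ne.symm hA0)
  set B : ℝ := (ε * A / 2) ^ (q - 1) with hBdef
  have hBpos : 0 < B := Real.rpow_pos_of_pos (by positivity) _
  set K : ℝ := ε ^ m * ε ^ m / B with hKdef
  have hKpos : 0 < K := by positivity
  set E : ℝ := 2 * ε ^ ((1:ℝ)/2) with hEdef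
  have hEpos : 0 < E := by positivity
  -- pointwise bound
  have key : ∀ δ ∈ Set.Ioo (0:ℝ) ε, ∀ lam ∈ Set.Ioo (0:ℝ) ε,
      ENNReal.ofReal (δ ^ m * lam ^ m) /
          (ENNReal.ofReal ‖δ • ω - lam • σ - (2 * ε) • Lr‖) ^ q ≤
        ENNReal.ofReal K * (ENNReal.ofReal ((ε - δ) ^ (-(1/2):ℝ)) *
          ENNReal.ofReal ((ε - lam) ^ (-(1/2):ℝ))) := by
    intro δ hδ lam hlam
    set D : ℝ := ‖δ • ω - lam • σ - (2 * ε) • Lr‖ with hDdef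
    have hLrnorm : ‖Lr‖ = 1 := hL
    have hsum : 2 * ε - δ - lam ≤ D := by
      have h1 : ‖(2 * ε) • Lr‖ - ‖δ • ω - lam • σ‖ ≤ ‖(2 * ε) • Lr - (δ • ω - lam • σ)‖ :=
        norm_sub_norm_le _ _
      have h2 : ‖(2 * ε) • Lr - (δ • ω - lam • σ)‖ = D := by
        rw [hDdef, ← norm_neg (δ • ω - lam • σ - (2 * ε) • Lr)]
        congr 1
        module
      have h3 : ‖(2 * ε) • Lr‖ = 2 * ε := by
        rw [norm_smul, hLrnorm, mul_one, Real.norm_eq_abs, abs_of_pos (by linarith)]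
      have h4 : ‖δ • ω - lam • σ‖ ≤ δ + lam := by
        refine le_trans (norm_sub_le _ _) ?_
        rw [norm_smul, norm_smul, hω, hσ, mul_one, mul_one, Real.norm_eq_abs,
          Real.norm_eq_abs, abs_of_pos hδ.1, abs_of_pos hlam.1]
      linarith
    have hD1 : ε * A / 2 ≤ D := by
      have h5 : ε * A = ‖ε • ω - ε • σ - (2 * ε) • Lr‖ := by
        have : ε • ω - ε • σ - (2 * ε) • Lr = ε • (ω - σ - (2:ℝ) • Lr) := by module
        rw [this, norm_smul, Real.norm_eq_abs, abs_of_pos hε, hAdef]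
      have h6 : ε • ω - ε • σ - (2 * ε) • Lr =
          (δ • ω - lam • σ - (2 * ε) • Lr) + ((ε - δ) • ω - (ε - lam) • σ) := by module
      have h7 : ‖(ε - δ) • ω - (ε - lam) • σ‖ ≤ (ε - δ) + (ε - lam) := by
        refine le_trans (norm_sub_le _ _) ?_
        rw [norm_smul, norm_smul, hω, hσ, mul_one, mul_one, Real.norm_eq_abs,
          Real.norm_eq_abs, abs_of_nonneg (by linarith [hδ.2] : (0:ℝ) ≤ ε - δ),
          abs_of_nonneg (by linarith [hlam.2] : (0:ℝ) ≤ ε - lam)]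
      have h8 : ε * A ≤ D + ((ε - δ) + (ε - lam)) := by
        rw [h5, h6]
        exact le_trans (norm_add_le _ _) (by exact add_le_add le_rfl h7)
      linarith
    have hDpos : 0 < D := lt_of_lt_of_le (by positivity) hD1
    have hDδ : ε - δ ≤ D := by linarith [hlam.2]
    have hDlam : ε - lam ≤ D := by linarith [hδ.2]
    have hεδ : (0:ℝ) < ε - δ := by linarith [hδ.2]
    have hεlam : (0:ℝ) < ε - lam := by linarith [hlam.2]
    have hgeom : ((ε - δ) * (ε - lam)) ^ ((1:ℝ)/2) ≤ D := by
      have h9 : (ε - δ) * (ε - lam) ≤ D * D :=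
        mul_le_mul hDδ hDlam hεlam.le hDpos.le
      have h10 : (D * D) ^ ((1:ℝ)/2) = D := by
        have : D * D = D ^ (2:ℝ) := by
          rw [show (2:ℝ) = ((2:ℕ):ℝ) by norm_num, Real.rpow_natCast]; ring
        rw [this, ← Real.rpow_mul hDpos.le]
        norm_num
      calc ((ε - δ) * (ε - lam)) ^ ((1:ℝ)/2)
          ≤ (D * D) ^ ((1:ℝ)/2) :=
            Real.rpow_le_rpow (by positivity) h9 (by norm_num)
        _ = D := h10
    have hDq : B * ((ε - δ) ^ ((1:ℝ)/2) * (ε - lam) ^ ((1:ℝ)/2)) ≤ D ^ q := by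
      have hsplit : D ^ q = D ^ (q - 1) * D := by
        rw [← Real.rpow_add_one hDpos.ne' (q - 1)]
        ring_nf
      rw [hsplit]
      have hB : B ≤ D ^ (q - 1) := by
        rw [hBdef]
        exact Real.rpow_le_rpow (by positivity) hD1 (by linarith)
      have hmul : (ε - δ) ^ ((1:ℝ)/2) * (ε - lam) ^ ((1:ℝ)/2) =
          ((ε - δ) * (ε - lam)) ^ ((1:ℝ)/2) := (Real.mul_rpow hεδ.le hεlam.le).symm
      rw [hmul]
      exact mul_le_mul hB hgeom (Real.rpow_nonneg (by positivity) _)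
        (Real.rpow_nonneg hDpos.le _)
    have hnum : δ ^ m * lam ^ m ≤ ε ^ m * ε ^ m :=
      mul_le_mul (pow_le_pow_left₀ hδ.1.le hδ.2.le _) (pow_le_pow_left₀ hlam.1.le hlam.2.le _)
        (pow_nonneg hlam.1.le _) (pow_nonneg hε.le _)
    calc ENNReal.ofReal (δ ^ m * lam ^ m) / (ENNReal.ofReal D) ^ q
        = ENNReal.ofReal (δ ^ m * lam ^ m) / ENNReal.ofReal (D ^ q) := by
          rw [ENNReal.ofReal_rpow_of_pos hDpos]
      _ ≤ ENNReal.ofReal (ε ^ m * ε ^ m) /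
          ENNReal.ofReal (B * ((ε - δ) ^ ((1:ℝ)/2) * (ε - lam) ^ ((1:ℝ)/2))) :=
          ENNReal.div_le_div (ENNReal.ofReal_le_ofReal hnum) (ENNReal.ofReal_le_ofReal hDq)
      _ = ENNReal.ofReal K * (ENNReal.ofReal ((ε - δ) ^ (-(1/2):ℝ)) *
          ENNReal.ofReal ((ε - lam) ^ (-(1/2):ℝ))) := by
          rw [← ENNReal.ofReal_div_of_pos (by positivity), ← ENNReal.ofReal_mul
            (Real.rpow_nonneg hεδ.le _), ← ENNReal.ofReal_mul hKpos.le]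
          congr 1
          rw [hKdef, Real.rpow_neg hεδ.le, Real.rpow_neg hεlam.le]
          have h1 : ((ε - δ) ^ ((1:ℝ)/2)) ≠ 0 := (Real.rpow_pos_of_pos hεδ _).ne'
          have h2 : ((ε - lam) ^ ((1:ℝ)/2)) ≠ 0 := (Real.rpow_pos_of_pos hεlam _).ne'
          field_simp
  -- integrate
  have step1 : (∫⁻ δ in Set.Ioo (0 : ℝ) ε, ∫⁻ lam in Set.Ioo (0 : ℝ) ε,
      ENNReal.ofReal (δ ^ m * lam ^ m) /
        (ENNReal.ofReal ‖δ • ω - lam • σ - (2 * ε) • Lr‖) ^ q) ≤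
      ENNReal.ofReal K * ENNReal.ofReal E * ENNReal.ofReal E := by
    calc (∫⁻ δ in Set.Ioo (0 : ℝ) ε, ∫⁻ lam in Set.Ioo (0 : ℝ) ε,
        ENNReal.ofReal (δ ^ m * lam ^ m) /
          (ENNReal.ofReal ‖δ • ω - lam • σ - (2 * ε) • Lr‖) ^ q)
        ≤ ∫⁻ δ in Set.Ioo (0 : ℝ) ε,
            (ENNReal.ofReal K * ENNReal.ofReal ((ε - δ) ^ (-(1/2):ℝ))) *
            ∫⁻ lam in Set.Ioo (0 : ℝ) ε, ENNReal.ofReal ((ε - lam) ^ (-(1/2):ℝ)) := by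
          refine lintegral_mono_ae ?_
          filter_upwards [ae_restrict_mem measurableSet_Ioo] with δ hδ
          rw [← lintegral_const_mul' _ _
            (ENNReal.mul_ne_top ENNReal.ofReal_ne_top ENNReal.ofReal_ne_top)]
          refine lintegral_mono_ae ?_
          filter_upwards [ae_restrict_mem measurableSet_Ioo] with lam hlam
          calc ENNReal.ofReal (δ ^ m * lam ^ m) /
              (ENNReal.ofReal ‖δ • ω - lam • σ - (2 * ε) • Lr‖) ^ q
              ≤ ENNReal.ofReal K * (ENNReal.ofReal ((ε - δ) ^ (-(1/2):ℝ)) *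
                  ENNReal.ofReal ((ε - lam) ^ (-(1/2):ℝ))) := key δ hδ lam hlam
            _ = ENNReal.ofReal K * ENNReal.ofReal ((ε - δ) ^ (-(1/2):ℝ)) *
                  ENNReal.ofReal ((ε - lam) ^ (-(1/2):ℝ)) := by ring
      _ ≤ ∫⁻ δ in Set.Ioo (0 : ℝ) ε,
            (ENNReal.ofReal K * ENNReal.ofReal ((ε - δ) ^ (-(1/2):ℝ))) *
            ENNReal.ofReal E := by
          refine lintegral_mono fun δ => ?_
          exact mul_le_mul_right (aux_integral ε hε) _
      _ = (ENNReal.ofReal K * ENNReal.ofReal E) *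
            ∫⁻ δ in Set.Ioo (0 : ℝ) ε, ENNReal.ofReal ((ε - δ) ^ (-(1/2):ℝ)) := by
          rw [← lintegral_const_mul' _ _
            (ENNReal.mul_ne_top ENNReal.ofReal_ne_top ENNReal.ofReal_ne_top)]
          exact lintegral_congr fun δ => by ring
      _ ≤ (ENNReal.ofReal K * ENNReal.ofReal E) * ENNReal.ofReal E :=
          mul_le_mul_right (aux_integral ε hε) _
      _ = ENNReal.ofReal K * ENNReal.ofReal E * ENNReal.ofReal E := by ring
  refine le_trans step1 ?_
  -- final real comparison
  rw [← ENNReal.ofReal_mul hKpos.le, ← ENNReal.ofReal_mul (by positivity)]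
  rw [ENNReal.ofReal_rpow_of_pos hApos, ← ENNReal.ofReal_div_of_pos
    (Real.rpow_pos_of_pos hApos _)]
  apply ENNReal.ofReal_le_ofReal
  have hdiv' : ε ^ ((((m:ℝ) + 1)) - s * p) = (ε ^ m * ε ^ m * ε) / ε ^ (q - 1) := by
    have hexp : (((m:ℝ) + 1)) - s * p = ((2 * m + 1 : ℕ) : ℝ) - (q - 1) := by
      rw [hq]; push_cast; ring
    rw [hexp, Real.rpow_sub hε, Real.rpow_natCast]
    congr 1
    ring
  have hB' : B = ε ^ (q - 1) * A ^ (q - 1) / 2 ^ (q - 1) := by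
    rw [hBdef, Real.div_rpow (by positivity) (by norm_num), Real.mul_rpow hε.le hApos.le]
  have hEE : E * E = 4 * ε := by
    rw [hEdef]
    have : ε ^ ((1:ℝ)/2) * ε ^ ((1:ℝ)/2) = ε := by
      rw [← Real.rpow_add hε]; norm_num
    nlinarith [this]
  have h2q : (0:ℝ) < 2 ^ (q - 1) := Real.rpow_pos_of_pos two_pos _
  have hεq : (0:ℝ) < ε ^ (q - 1) := Real.rpow_pos_of_pos hε _
  have hAq : (0:ℝ) < A ^ (q - 1) := Real.rpow_pos_of_pos hApos _
  have hcast : ((m + 1 : ℕ) : ℝ) = (m:ℝ) + 1 := by push_cast; ring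
  rw [hcast] at hq ⊢
  apply le_of_eq
  rw [mul_assoc, hEE, hKdef, hB', hdiv']
  have hεm : (0:ℝ) < ε ^ m := by positivity
  field_simp
end
end

section
/- Let n ≥ 2 and let e₁, e₂ be the first two standard basis vectors of ℝⁿ. There is a constant C = C(n) > 0 such that for all real numbers 0 ≤ t, u ≤ 1 and all vectors v, w ∈ ℝⁿ with v ⊥ e₁ (Euclidean orthogonality), |v| = 1, w ⊥ e₂, |w| = 1 (sup norm), one has |(e₁ + t v) − (e₂ + u w)| ≥ C |(e₁ + t v) − (e₂ + w)|. -/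
open MeasureTheory Filter Topology

noncomputable section

/-- Let `n ≥ 2` and let `e₁, e₂` be the first two standard basis vectors of
`ℝⁿ`.  There is a constant `C = C(n) > 0` such that for all `0 ≤ t, u ≤ 1` and all vectors
`v, w ∈ ℝⁿ` with `v ⊥ e₁` (Euclidean orthogonality, i.e. first coordinate zero), `|v| = 1`,
`w ⊥ e₂`, `|w| = 1` (sup norm, the norm of the Pi type `Fin n → ℝ`),
`|(e₁ + t v) − (e₂ + u w)| ≥ C |(e₁ + t v) − (e₂ + w)|`. -/
theorem statement13 (n : ℕ) (hn : 2 ≤ n) :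
    ∃ C : ℝ, 0 < C ∧ ∀ (t u : ℝ), 0 ≤ t → t ≤ 1 → 0 ≤ u → u ≤ 1 →
      ∀ (v w : Fin n → ℝ),
        v ⟨0, by omega⟩ = 0 → ‖v‖ = 1 → w ⟨1, by omega⟩ = 0 → ‖w‖ = 1 →
        C * ‖(Pi.single (⟨0, by omega⟩ : Fin n) (1 : ℝ) + t • v) -
              (Pi.single (⟨1, by omega⟩ : Fin n) (1 : ℝ) + w)‖ ≤
          ‖(Pi.single (⟨0, by omega⟩ : Fin n) (1 : ℝ) + t • v) -
            (Pi.single (⟨1, by omega⟩ : Fin n) (1 : ℝ) + u • w)‖ := by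
  refine ⟨1/2, by norm_num, ?_⟩
  intro t u ht ht1 hu hu1 v w hv0 hv hw1 hw
  set i0 : Fin n := ⟨0, by omega⟩ with hi0
  set i1 : Fin n := ⟨1, by omega⟩ with hi1
  have hne : i1 ≠ i0 := by simp [hi0, hi1, Fin.ext_iff]
  set L : Fin n → ℝ := (Pi.single i0 (1 : ℝ) + t • v) - (Pi.single i1 (1 : ℝ) + u • w)
    with hL
  set R : Fin n → ℝ := (Pi.single i0 (1 : ℝ) + t • v) - (Pi.single i1 (1 : ℝ) + w)
    with hR
  have hw0 : |w i0| ≤ 1 := by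
    calc |w i0| = ‖w i0‖ := rfl
    _ ≤ ‖w‖ := norm_le_pi_norm w i0
    _ = 1 := hw
  -- first coordinate of L
  have hcoord : L i0 = 1 - u * w i0 := by
    simp [hL, Pi.single_apply, hne, hv0]
  have hlow : 1 - u ≤ ‖L‖ := by
    have h1 : |L i0| ≤ ‖L‖ := norm_le_pi_norm L i0
    have h2 : 1 - u ≤ |1 - u * w i0| := by
      have : |u * w i0| ≤ u := by
        rw [abs_mul, abs_of_nonneg hu]
        nlinarith
      cases abs_cases (1 - u * w i0) with
      | inl h => nlinarith [abs_nonneg (u * w i0), le_abs_self (u * w i0),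
          neg_abs_le (u * w i0)]
      | inr h => nlinarith [abs_nonneg (u * w i0), le_abs_self (u * w i0),
          neg_abs_le (u * w i0)]
    rw [hcoord] at h1
    linarith
  have hRL : R = L - (1 - u) • w := by
    rw [hL, hR]
    module
  have hnorm : ‖R‖ ≤ ‖L‖ + (1 - u) := by
    rw [hRL]
    calc ‖L - (1 - u) • w‖ ≤ ‖L‖ + ‖(1 - u) • w‖ := norm_sub_le _ _
    _ = ‖L‖ + (1 - u) := by
        rw [norm_smul, hw, Real.norm_eq_abs, abs_of_nonneg (by linarith)]
        ring
  linarith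
end
end

section
/- Let n ≥ 1 and 0 ≤ j ≤ n be integers. Call a set 𝔠 ⊂ ℝⁿ a closed j-cell of the standard mesh if there exist C ∈ ℤⁿ and a subset I ⊂ {1, …, n} with #I = n − j such that C_i is odd for i ∈ I, C_i is even for i ∉ I, and 𝔠 = {X ∈ ℝⁿ : X_i = C_i for i ∈ I, |X_i − C_i| ≤ 1 for i ∉ I}. There is a constant C₀ = C₀(n, j) such that for any two distinct closed j-cells 𝔠, 𝔠' of the standard mesh with 𝔠 ∩ 𝔠' ≠ ∅, and any X ∈ 𝔠, Y ∈ 𝔠', there exists Z ∈ 𝔠 ∩ 𝔠' with |X − Z| + |Y − Z| ≤ C₀ |X − Y|. -/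
open MeasureTheory Filter Topology

noncomputable section

/-- A closed `j`-cell of the standard mesh in `ℝⁿ`: a closed `j`-dimensional face of one of
the cubes `Q̄₁(2K) = {X : |X − 2K| ≤ 1}`, `K ∈ ℤⁿ`.  It is determined by a center
`C ∈ ℤⁿ` with exactly `n − j` odd coordinates (indexed by `I`), all other coordinates even. -/
def IsClosedCell (n j : ℕ) (c : Set (Fin n → ℝ)) : Prop :=
  ∃ (C : Fin n → ℤ) (I : Finset (Fin n)),
    I.card = n - j ∧ (∀ i ∈ I, Odd (C i)) ∧ (∀ i ∉ I, Even (C i)) ∧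
    c = {X : Fin n → ℝ | (∀ i ∈ I, X i = (C i : ℝ)) ∧ ∀ i ∉ I, |X i - (C i : ℝ)| ≤ 1}

private lemma between_bound (x y z : ℝ) (h : (z - x) * (z - y) ≤ 0) :
    |x - z| ≤ |x - y| ∧ |y - z| ≤ |x - y| := by
  rcases le_total x y with hxy | hxy
  · have h1 : x ≤ z := by by_contra h'; push_neg at h'; nlinarith
    have h2 : z ≤ y := by by_contra h'; push_neg at h'; nlinarith
    rw [abs_of_nonpos (by linarith : x - z ≤ 0), abs_of_nonneg (by linarith : (0:ℝ) ≤ y - z),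
      abs_of_nonpos (by linarith : x - y ≤ 0)]
    constructor <;> linarith
  · have h1 : y ≤ z := by by_contra h'; push_neg at h'; nlinarith
    have h2 : z ≤ x := by by_contra h'; push_neg at h'; nlinarith
    rw [abs_of_nonneg (by linarith : (0:ℝ) ≤ x - z), abs_of_nonpos (by linarith : y - z ≤ 0),
      abs_of_nonneg (by linarith : (0:ℝ) ≤ x - y)]
    constructor <;> linarith

/-- Let `n ≥ 1` and `0 ≤ j ≤ n`.  There is a constant `C₀ = C₀(n, j)` such
that for any two distinct closed `j`-cells `c, c'` of the standard mesh with `c ∩ c' ≠ ∅`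
and any `X ∈ c`, `Y ∈ c'`, there is `Z ∈ c ∩ c'` with `|X − Z| + |Y − Z| ≤ C₀ |X − Y|`
(sup norm, the norm of the Pi type `Fin n → ℝ`). -/
theorem statement16 (n j : ℕ) (hn : 1 ≤ n) (hj : j ≤ n) :
    ∃ C₀ : ℝ, 0 < C₀ ∧ ∀ (c c' : Set (Fin n → ℝ)),
      IsClosedCell n j c → IsClosedCell n j c' → c ≠ c' → (c ∩ c').Nonempty →
      ∀ X ∈ c, ∀ Y ∈ c', ∃ Z ∈ c ∩ c', ‖X - Z‖ + ‖Y - Z‖ ≤ C₀ * ‖X - Y‖ := by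
  classical
  refine ⟨2, by norm_num, ?_⟩
  rintro c c' ⟨C, I, hI, hIo, hIe, rfl⟩ ⟨C', I', hI', hIo', hIe', rfl⟩ hne ⟨W, hW1, hW2⟩ X hX Y hY
  simp only [Set.mem_setOf_eq] at hW1 hW2 hX hY
  obtain ⟨hW1a, hW1b⟩ := hW1
  obtain ⟨hW2a, hW2b⟩ := hW2
  obtain ⟨hXa, hXb⟩ := hX
  obtain ⟨hYa, hYb⟩ := hY
  set Z : Fin n → ℝ := fun i =>
    if i ∈ I then X i else if i ∈ I' then Y i
    else if C i = C' i then X i else ((C i : ℝ) + (C' i : ℝ)) / 2 with hZdef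
  have hZ1 : ∀ i ∈ I, Z i = X i := by intro i hi; simp [hZdef, hi]
  have hZ2 : ∀ i, i ∉ I → i ∈ I' → Z i = Y i := by intro i hi hi'; simp [hZdef, hi, hi']
  have hZ3 : ∀ i, i ∉ I → i ∉ I' → C i = C' i → Z i = X i := by
    intro i hi hi' h; simp [hZdef, hi, hi', h]
  have hZ4 : ∀ i, i ∉ I → i ∉ I' → C i ≠ C' i → Z i = ((C i : ℝ) + (C' i : ℝ)) / 2 := by
    intro i hi hi' h; simp [hZdef, hi, hi', h]
  -- in the mixed case the two even centers differ by exactly 2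
  have hdiff : ∀ i, i ∉ I → i ∉ I' → C i ≠ C' i → C' i = C i + 2 ∨ C' i = C i - 2 := by
    intro i hi hi' hne'
    have h1 := abs_le.mp (hW1b i hi)
    have h2 := abs_le.mp (hW2b i hi')
    have h3 : |(C i : ℝ) - (C' i : ℝ)| ≤ 2 := by
      rw [abs_le]; constructor <;> linarith
    have h4 : ((|C i - C' i| : ℤ) : ℝ) ≤ 2 := by push_cast; exact h3
    have h5 : |C i - C' i| ≤ 2 := by exact_mod_cast h4
    obtain ⟨a, ha⟩ := hIe i hi
    obtain ⟨b, hb⟩ := hIe' i hi'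
    rw [abs_le] at h5
    omega
  -- membership of Z in both cells
  have hZc : (∀ i ∈ I, Z i = (C i : ℝ)) ∧ ∀ i ∉ I, |Z i - (C i : ℝ)| ≤ 1 := by
    constructor
    · intro i hi; rw [hZ1 i hi]; exact hXa i hi
    · intro i hi
      by_cases hi' : i ∈ I'
      · rw [hZ2 i hi hi', hYa i hi', ← hW2a i hi']
        exact hW1b i hi
      · by_cases h : C i = C' i
        · rw [hZ3 i hi hi' h]; exact hXb i hi
        · rw [hZ4 i hi hi' h]
          have hd' : (C' i : ℝ) = (C i : ℝ) + 2 ∨ (C' i : ℝ) = (C i : ℝ) - 2 := by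
            rcases hdiff i hi hi' h with hd2 | hd2
            · left; exact_mod_cast hd2
            · right; exact_mod_cast hd2
          rcases hd' with hd' | hd' <;> rw [hd', abs_le] <;> constructor <;> linarith
  have hZc' : (∀ i ∈ I', Z i = (C' i : ℝ)) ∧ ∀ i ∉ I', |Z i - (C' i : ℝ)| ≤ 1 := by
    constructor
    · intro i hi'
      by_cases hi : i ∈ I
      · rw [hZ1 i hi, hXa i hi, ← hW1a i hi]
        exact hW2a i hi'
      · rw [hZ2 i hi hi']; exact hYa i hi'
    · intro i hi'
      by_cases hi : i ∈ I
      · rw [hZ1 i hi, hXa i hi, ← hW1a i hi]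
        exact hW2b i hi'
      · by_cases h : C i = C' i
        · rw [hZ3 i hi hi' h, ← h]; exact hXb i hi
        · rw [hZ4 i hi hi' h]
          have hd' : (C' i : ℝ) = (C i : ℝ) + 2 ∨ (C' i : ℝ) = (C i : ℝ) - 2 := by
            rcases hdiff i hi hi' h with hd2 | hd2
            · left; exact_mod_cast hd2
            · right; exact_mod_cast hd2
          rcases hd' with hd' | hd' <;> rw [hd', abs_le] <;> constructor <;> linarith
  -- Z lies between X and Y in every coordinate
  have hprod : ∀ i, (Z i - X i) * (Z i - Y i) ≤ 0 := by
    intro i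
    by_cases hi : i ∈ I
    · rw [hZ1 i hi]; simp
    · by_cases hi' : i ∈ I'
      · rw [hZ2 i hi hi']; simp
      · by_cases h : C i = C' i
        · rw [hZ3 i hi hi' h]; simp
        · rw [hZ4 i hi hi' h]
          have hx := abs_le.mp (hXb i hi)
          have hy := abs_le.mp (hYb i hi')
          have hd' : (C' i : ℝ) = (C i : ℝ) + 2 ∨ (C' i : ℝ) = (C i : ℝ) - 2 := by
            rcases hdiff i hi hi' h with hd2 | hd2
            · left; exact_mod_cast hd2
            · right; exact_mod_cast hd2
          rcases hd' with hd' | hd' <;> rw [hd'] at hy ⊢ <;> nlinarith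
  have hb : ∀ i, |X i - Z i| ≤ |X i - Y i| ∧ |Y i - Z i| ≤ |X i - Y i| :=
    fun i => between_bound _ _ _ (hprod i)
  have hXZ : ‖X - Z‖ ≤ ‖X - Y‖ := by
    refine (pi_norm_le_iff_of_nonneg (norm_nonneg _)).mpr fun i => ?_
    calc ‖(X - Z) i‖ = |X i - Z i| := by simp [Real.norm_eq_abs]
      _ ≤ |X i - Y i| := (hb i).1
      _ = ‖(X - Y) i‖ := by simp [Real.norm_eq_abs]
      _ ≤ ‖X - Y‖ := norm_le_pi_norm _ i
  have hYZ : ‖Y - Z‖ ≤ ‖X - Y‖ := by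
    refine (pi_norm_le_iff_of_nonneg (norm_nonneg _)).mpr fun i => ?_
    calc ‖(Y - Z) i‖ = |Y i - Z i| := by simp [Real.norm_eq_abs]
      _ ≤ |X i - Y i| := (hb i).2
      _ = ‖(X - Y) i‖ := by simp [Real.norm_eq_abs]
      _ ≤ ‖X - Y‖ := norm_le_pi_norm _ i
  exact ⟨Z, ⟨hZc, hZc'⟩, by linarith⟩
end
end
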